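/- arXiv:2005.02250 — 3 statements merged into one kernel-verified Lean document; each statement's English description precedes it below -/
import Mathlib

section
/- Every finite (P5, C4)-free graph G with at least one vertex satisfies χ(G) ≤ ⌈(5·ω(G) − 1)/4⌉. -/
open SimpleGraph

/-- `G` is `H`-free: no induced subgraph of `G` is isomorphic to `H`. -/
def IndFree {α β : Type*} (H : SimpleGraph α) (G : SimpleGraph β) : Prop :=
  ∀ s : Set β, ¬ Nonempty (H ≃g G.induce s)

/-- The banner: a 4-cycle `0-1-2-3-0` together with a pendant vertex `4` adjacent to `0`. -/
def banner : SimpleGraph (Fin 5) :=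
  SimpleGraph.fromEdgeSet {s(0,1), s(1,2), s(2,3), s(3,0), s(0,4)}

/-- The co-banner: the complement of the banner. -/
def coBanner : SimpleGraph (Fin 5) := bannerᶜ

/-- `2K₂`: the disjoint union of two edges. -/
def twoK2 : SimpleGraph (Fin 4) := SimpleGraph.fromEdgeSet {s(0,1), s(2,3)}

/-- `3K₁`: three pairwise nonadjacent vertices. -/
def threeK1 : SimpleGraph (Fin 3) := ⊥

/-- The 5-wheel: a 5-cycle `0-1-2-3-4-0` plus a hub `5` adjacent to all cycle vertices. -/
def wheel5 : SimpleGraph (Fin 6) :=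
  SimpleGraph.fromEdgeSet
    {s(0,1), s(1,2), s(2,3), s(3,4), s(4,0), s(5,0), s(5,1), s(5,2), s(5,3), s(5,4)}

/-- A nonempty set `M` is a module if every vertex outside `M` is adjacent to all
or to none of the vertices of `M`. -/
def IsModule {V : Type*} (G : SimpleGraph V) (M : Set V) : Prop :=
  M.Nonempty ∧ ∀ v ∉ M, (∀ u ∈ M, G.Adj v u) ∨ (∀ u ∈ M, ¬ G.Adj v u)

/-- `X` is a clique-separator of modules in `G`. -/
def IsCliqueSeparatorOfModules {V : Type*} (G : SimpleGraph V) (X : Set V) : Prop :=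
  (∃ (k : ℕ) (Xs : Fin k → Set V),
      (∀ i, IsModule G (Xs i)) ∧
      (∀ i j, i ≠ j → Disjoint (Xs i) (Xs j)) ∧
      (∀ i j, i ≠ j → ∀ u ∈ Xs i, ∀ v ∈ Xs j, G.Adj u v) ∧
      X = ⋃ i, Xs i) ∧
  (∃ A B : Set V, A ∪ B = Set.univ ∧ (A \ B).Nonempty ∧ (B \ A).Nonempty ∧
      (∀ a ∈ A \ B, ∀ b ∈ B \ A, ¬ G.Adj a b) ∧ A ∩ B = X)

/-- A graph is prime if it has no homogeneous set,
i.e. no module `M` with `1 < |M| < |V(G)|`. -/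
def IsPrime {V : Type*} (G : SimpleGraph V) : Prop :=
  ¬ ∃ M : Set V, IsModule G M ∧ 1 < M.ncard ∧ M.ncard < Nat.card V

/-- A nonempty graph is critical if deleting any vertex decreases the chromatic number. -/
def IsCritical {V : Type*} (G : SimpleGraph V) : Prop :=
  Nonempty V ∧ ∀ v : V, (G.induce {u | u ≠ v}).chromaticNumber < G.chromaticNumber

/-- `G` is a `non-empty, 2K₁-free'-expansion of `G'`: the fibres of `f` partition `V(G)`
into nonempty cliques, with complete/empty bipartite connections according to `G'`. -/
def IsExpansionOf {V W : Type*} (G : SimpleGraph V) (G' : SimpleGraph W) : Prop :=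
  ∃ f : V → W, Function.Surjective f ∧
    (∀ u v, u ≠ v → f u = f v → G.Adj u v) ∧
    (∀ u v, f u ≠ f v → (G.Adj u v ↔ G'.Adj (f u) (f v)))

/-- The weighted chromatic number `χ_q(G)`: the least `k` such that every vertex `v`
can be assigned a set of `q v` colours from `{1,…,k}` with disjoint sets on adjacent
vertices. -/
noncomputable def wChromaticNumber {V : Type*} (G : SimpleGraph V) (q : V → ℕ) : ℕ :=
  sInf {k | ∃ L : V → Finset (Fin k), (∀ v, (L v).card = q v) ∧
    ∀ ⦃u v⦄, G.Adj u v → Disjoint (L u) (L v)}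

/-- The weighted clique number `ω_q(G)`: the maximum total weight of a clique. -/
noncomputable def wCliqueNum {V : Type*} (G : SimpleGraph V) (q : V → ℕ) : ℕ :=
  sSup {m | ∃ s : Finset V, G.IsClique (s : Set V) ∧ m = ∑ v ∈ s, q v}

/-- `Q(F)`: a path `u₁u₂u₃u₄` whose third vertex `u₃` has been replaced by a copy of `F`,
each of whose vertices is adjacent to both `u₂` and `u₄`. Here `inr 0 = u₁`, `inr 1 = u₂`,
`inr 2 = u₄`, and `inl w` are the vertices of the copy of `F`. -/
def QGraph {W : Type*} (F : SimpleGraph W) : SimpleGraph (W ⊕ Fin 3) :=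
  SimpleGraph.fromRel (fun a b =>
    (∃ w w', a = Sum.inl w ∧ b = Sum.inl w' ∧ F.Adj w w') ∨
    (a = Sum.inr 0 ∧ b = Sum.inr 1) ∨
    (∃ w, a = Sum.inl w ∧ (b = Sum.inr 1 ∨ b = Sum.inr 2)))

/-- The join of two graphs: all edges of both graphs plus all edges in between. -/
def joinGraph {α β : Type*} (G₁ : SimpleGraph α) (G₂ : SimpleGraph β) :
    SimpleGraph (α ⊕ β) :=
  SimpleGraph.fromRel (fun a b =>
    (∃ u v, a = Sum.inl u ∧ b = Sum.inl v ∧ G₁.Adj u v) ∨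
    (∃ u v, a = Sum.inr u ∧ b = Sum.inr v ∧ G₂.Adj u v) ∨
    (∃ u v, a = Sum.inl u ∧ b = Sum.inr v))

/-- `H` has a spanning complete bipartite subgraph. -/
def HasSpanningCompleteBipartite {α : Type*} (H : SimpleGraph α) : Prop :=
  ∃ A B : Set α, A.Nonempty ∧ B.Nonempty ∧ Disjoint A B ∧ A ∪ B = Set.univ ∧
    ∀ a ∈ A, ∀ b ∈ B, H.Adj a b

/-- `G'` is a `q`-expansion of `G`: each vertex `u` of `G` is replaced by a clique on
`q u` vertices, joined completely or not at all according to adjacency in `G`. -/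
def IsWeightedExpansion {V' V : Type*} (G' : SimpleGraph V') (G : SimpleGraph V)
    (q : V → ℕ) : Prop :=
  ∃ f : V' → V,
    (∀ v : V, Nat.card (f ⁻¹' {v}) = q v) ∧
    (∀ a b : V', a ≠ b → f a = f b → G'.Adj a b) ∧
    (∀ a b : V', f a ≠ f b → (G'.Adj a b ↔ G.Adj (f a) (f b)))

/-- `q` is `⊲`-minimal: no weight function pointwise at most `q` with strictly smaller
total weight has the same weighted chromatic number. -/
def IsTriMinimal {V : Type*} [Fintype V] (G : SimpleGraph V) (q : V → ℕ) : Prop :=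
  ¬ ∃ q' : V → ℕ, (∀ v, q' v ≤ q v) ∧ (∑ v, q' v) < (∑ v, q v) ∧
      wChromaticNumber G q' = wChromaticNumber G q


section AuxProof
open Finset


def HasCopy {k : ℕ} {V : Type*} (H : SimpleGraph (Fin k)) (G : SimpleGraph V) : Prop :=
  ∃ f : Fin k → V, Function.Injective f ∧ ∀ a b, G.Adj (f a) (f b) ↔ H.Adj a b


lemma IndFree.not_hasCopy {k : ℕ} {V : Type*} {H : SimpleGraph (Fin k)} {G : SimpleGraph V}
    (h : IndFree H G) : ¬ HasCopy H G := by
  rintro ⟨f, hf, hadj⟩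
  refine h (Set.range f) ⟨{ toEquiv := Equiv.ofInjective f hf, map_rel_iff' := ?_ }⟩
  intro a b
  simpa [SimpleGraph.comap_adj] using (hadj a b)

lemma HasCopy.of_induce {k : ℕ} {V : Type*} {H : SimpleGraph (Fin k)} {G : SimpleGraph V}
    {s : Set V} (h : HasCopy H (G.induce s)) : HasCopy H G := by
  obtain ⟨f, hf, hadj⟩ := h
  exact ⟨fun i => (f i : V), fun i j hij => hf (Subtype.val_injective hij), hadj⟩

lemma hasCopy_P5 {V : Type*} {G : SimpleGraph V} (a b c d e : V)
    (hab : G.Adj a b) (hbc : G.Adj b c) (hcd : G.Adj c d) (hde : G.Adj d e)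
    (nac : ¬G.Adj a c) (nad : ¬G.Adj a d) (nae : ¬G.Adj a e)
    (nbd : ¬G.Adj b d) (nbe : ¬G.Adj b e) (nce : ¬G.Adj c e)
    (dac : a ≠ c) (dad : a ≠ d) (dae : a ≠ e) (dbd : b ≠ d) (dbe : b ≠ e) (dce : c ≠ e) :
    HasCopy (pathGraph 5) G := by
  have hba := hab.symm; have hcb := hbc.symm; have hdc := hcd.symm; have hed := hde.symm
  have nca : ¬G.Adj c a := fun h => nac h.symm
  have nda : ¬G.Adj d a := fun h => nad h.symm
  have nea : ¬G.Adj e a := fun h => nae h.symm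
  have ndb : ¬G.Adj d b := fun h => nbd h.symm
  have neb : ¬G.Adj e b := fun h => nbe h.symm
  have nec : ¬G.Adj e c := fun h => nce h.symm
  have dab := hab.ne; have dbc := hbc.ne; have dcd := hcd.ne; have dde := hde.ne
  refine ⟨![a,b,c,d,e], ?_, ?_⟩
  · intro i j hij
    fin_cases i <;> fin_cases j <;> simp_all
  · intro i j
    fin_cases i <;> fin_cases j <;>
      simp only [Matrix.cons_val_zero, Matrix.cons_val_one, Matrix.head_cons,
        Matrix.cons_val_two, Matrix.tail_cons, Matrix.cons_val_three, Matrix.cons_val_four] <;>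
      first
        | exact iff_of_true (by assumption) (by rw [pathGraph_adj]; decide)
        | exact iff_of_false (by first | assumption | exact G.irrefl) (by rw [pathGraph_adj]; decide)

section Builders
variable {V : Type*} {G : SimpleGraph V}

lemma hasCopy_C4 (a b c d : V)
    (hab : G.Adj a b) (hbc : G.Adj b c) (hcd : G.Adj c d) (hda : G.Adj d a)
    (nac : ¬G.Adj a c) (nbd : ¬G.Adj b d) (dac : a ≠ c) (dbd : b ≠ d) :
    HasCopy (cycleGraph 4) G := by
  have hba := hab.symm; have hcb := hbc.symm; have hdc := hcd.symm; have had := hda.symm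
  have nca : ¬G.Adj c a := fun h => nac h.symm
  have ndb : ¬G.Adj d b := fun h => nbd h.symm
  have dab := hab.ne; have dbc := hbc.ne; have dcd := hcd.ne; have dda := hda.ne
  refine ⟨![a,b,c,d], ?_, ?_⟩
  · intro i j hij
    fin_cases i <;> fin_cases j <;> simp_all
  · intro i j
    fin_cases i <;> fin_cases j <;>
      simp only [Matrix.cons_val_zero, Matrix.cons_val_one, Matrix.head_cons,
        Matrix.cons_val_two, Matrix.tail_cons, Matrix.cons_val_three] <;>
      first
        | exact iff_of_true (by assumption) (by decide)
        | exact iff_of_false (by first | assumption | exact G.irrefl) (by decide)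

lemma hasCopy_C5 (a b c d e : V)
    (hab : G.Adj a b) (hbc : G.Adj b c) (hcd : G.Adj c d) (hde : G.Adj d e) (hea : G.Adj e a)
    (nac : ¬G.Adj a c) (nbd : ¬G.Adj b d) (nce : ¬G.Adj c e) (nda : ¬G.Adj d a)
    (neb : ¬G.Adj e b)
    (dac : a ≠ c) (dbd : b ≠ d) (dce : c ≠ e) (dda : d ≠ a) (deb : e ≠ b) :
    HasCopy (cycleGraph 5) G := by
  have hba := hab.symm; have hcb := hbc.symm; have hdc := hcd.symm; have hed := hde.symm
  have hae := hea.symm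
  have nca : ¬G.Adj c a := fun h => nac h.symm
  have ndb : ¬G.Adj d b := fun h => nbd h.symm
  have nec : ¬G.Adj e c := fun h => nce h.symm
  have nad : ¬G.Adj a d := fun h => nda h.symm
  have nbe : ¬G.Adj b e := fun h => neb h.symm
  have dab := hab.ne; have dbc := hbc.ne; have dcd := hcd.ne; have dde := hde.ne
  have dea := hea.ne
  refine ⟨![a,b,c,d,e], ?_, ?_⟩
  · intro i j hij
    fin_cases i <;> fin_cases j <;> simp_all
  · intro i j
    fin_cases i <;> fin_cases j <;>
      simp only [Matrix.cons_val_zero, Matrix.cons_val_one, Matrix.head_cons,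
        Matrix.cons_val_two, Matrix.tail_cons, Matrix.cons_val_three, Matrix.cons_val_four] <;>
      first
        | exact iff_of_true (by assumption) (by decide)
        | exact iff_of_false (by first | assumption | exact G.irrefl) (by decide)

end Builders

lemma cliqueNum_induce_le {V : Type*} [Fintype V] (G : SimpleGraph V) (s : Set V) [Fintype s] :
    (G.induce s).cliqueNum ≤ G.cliqueNum := by
  classical
  obtain ⟨t, htc, htcard⟩ := exists_isNClique_cliqueNum (G := G.induce s)
  rw [← htcard]
  have himg : G.IsClique ((t.image Subtype.val : Finset V) : Set V) := by
    intro x hx y hy hne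
    simp only [Finset.coe_image, Set.mem_image, Finset.mem_coe] at hx hy
    obtain ⟨⟨x', hxs⟩, hxt, rfl⟩ := hx
    obtain ⟨⟨y', hys⟩, hyt, rfl⟩ := hy
    exact htc hxt hyt (fun h => hne (by rw [h]))
  have hcard : (t.image Subtype.val).card = t.card :=
    Finset.card_image_of_injective _ Subtype.val_injective
  calc t.card = (t.image Subtype.val).card := hcard.symm
    _ ≤ G.cliqueNum := IsClique.card_le_cliqueNum (tc := himg)

lemma exists_simplicial {V : Type*} [Fintype V] [Nonempty V] {G : SimpleGraph V}
    (hP5 : ¬HasCopy (pathGraph 5) G) (hC4 : ¬HasCopy (cycleGraph 4) G)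
    (hC5 : ¬HasCopy (cycleGraph 5) G) :
    ∃ v, ∀ x y, G.Adj v x → G.Adj v y → x ≠ y → G.Adj x y := by
  classical
  obtain ⟨v, -, hv⟩ := Finset.exists_min_image Finset.univ
    (fun u => (insert u (G.neighborFinset u)).card) ⟨Classical.arbitrary V, Finset.mem_univ _⟩
  refine ⟨v, ?_⟩
  intro x y hvx hvy hxy
  by_contra hxyn
  have hxNv : x ∈ insert v (G.neighborFinset v) := by
    simp [SimpleGraph.mem_neighborFinset, hvx]
  have hyNv : y ∈ insert v (G.neighborFinset v) := by
    simp [SimpleGraph.mem_neighborFinset, hvy]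
  have key : ∀ z, G.Adj v z → (∀ w, G.Adj v w → z ≠ w → ¬ G.Adj z w → False) ∨
      (∃ z', G.Adj z z' ∧ ¬ G.Adj v z' ∧ z' ≠ v) := by
    intro z hvz
    by_cases hsub : insert z (G.neighborFinset z) ⊆ insert v (G.neighborFinset v)
    · left
      have heq : insert z (G.neighborFinset z) = insert v (G.neighborFinset v) :=
        Finset.eq_of_subset_of_card_le hsub (hv z (Finset.mem_univ z))
      intro w hvw hzw hnadj
      have hwNv : w ∈ insert v (G.neighborFinset v) := by
        simp [SimpleGraph.mem_neighborFinset, hvw]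
      rw [← heq] at hwNv
      rcases Finset.mem_insert.mp hwNv with h | h
      · exact hzw h.symm
      · exact hnadj ((G.mem_neighborFinset _ _).mp h)
    · right
      obtain ⟨z', hz'mem, hz'nmem⟩ := Finset.not_subset.mp hsub
      have hz'v : z' ≠ v := fun h => hz'nmem (by rw [h]; exact Finset.mem_insert_self _ _)
      have hz'nadj : ¬ G.Adj v z' := fun h =>
        hz'nmem (Finset.mem_insert_of_mem ((G.mem_neighborFinset _ _).mpr h))
      rcases Finset.mem_insert.mp hz'mem with h | h
      · exfalso; exact hz'nadj (h ▸ hvz)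
      · exact ⟨z', (G.mem_neighborFinset _ _).mp h, hz'nadj, hz'v⟩
  rcases key x hvx with hall | ⟨x', hxx', hvx', hx'v⟩
  · exact hall y hvy hxy hxyn
  rcases key y hvy with hall | ⟨y', hyy', hvy', hy'v⟩
  · exact hall x hvx.symm.symm hxy.symm (fun h => hxyn h.symm)
  have hx'x : x' ≠ x := fun h => hvx' (h ▸ hvx)
  have hy'y : y' ≠ y := fun h => hvy' (h ▸ hvy)
  have hx'y : x' ≠ y := fun h => hxyn (by rw [h] at hxx'; exact hxx')
  have hy'x : y' ≠ x := fun h => hxyn (by rw [h] at hyy'; exact hyy'.symm)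
  by_cases hax'y : G.Adj x' y
  · exact hC4 (hasCopy_C4 v x x' y hvx hxx' hax'y hvy.symm hvx' hxyn (Ne.symm hx'v) hxy)
  by_cases hay'x : G.Adj y' x
  · exact hC4 (hasCopy_C4 v y y' x hvy hyy' hay'x hvx.symm hvy'
      (fun h => hxyn h.symm) (Ne.symm hy'v) hxy.symm)
  have hx'y' : x' ≠ y' := by
    intro h
    rw [← h] at hyy'
    exact hax'y hyy'.symm
  by_cases hax'y' : G.Adj x' y'
  · exact hC5 (hasCopy_C5 v x x' y' y hvx hxx' hax'y' hyy'.symm hvy.symm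
      hvx' (fun h => hay'x h.symm) hax'y (fun h => hvy' h.symm) (fun h => hxyn h.symm)
      (Ne.symm hx'v) (fun h => hy'x h.symm) hx'y hy'v hxy.symm)
  · exact hP5 (hasCopy_P5 x' x v y y' hxx'.symm hvx.symm hvy hyy'
      (fun h => hvx' h.symm) hax'y hax'y' hxyn (fun h => hay'x h.symm) hvy'
      hx'v hx'y hx'y' hxy (fun h => hy'x h.symm) (Ne.symm hy'v))



/-- colour-set scheme for a C5 expansion -/
def Scheme (b : Fin 5 → ℕ) (m : ℕ) : Prop :=
  ∃ S : Fin 5 → Finset ℕ, (∀ i, S i ⊆ Finset.range m) ∧ (∀ i, (S i).card = b i) ∧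
    ∀ i, Disjoint (S i) (S (i + 1))

lemma scheme_rot {b : Fin 5 → ℕ} {m : ℕ} (k : Fin 5) (h : Scheme (fun i => b (i + k)) m) :
    Scheme b m := by
  obtain ⟨S, hsub, hcard, hdisj⟩ := h
  refine ⟨fun i => S (i - k), fun i => hsub _, fun i => ?_, fun i => ?_⟩
  · have h := hcard (i - k); simp only [sub_add_cancel] at h; exact h
  · show Disjoint (S (i - k)) (S (i + 1 - k))
    have : i + 1 - k = (i - k) + 1 := by abel
    rw [this]; exact hdisj (i - k)

lemma sum_rot (b : Fin 5 → ℕ) (k : Fin 5) : (∑ i, b (i + k)) = ∑ i, b i :=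
  Fintype.sum_equiv (Equiv.addRight k) _ _ (fun _ => rfl)

lemma scheme_path {b : Fin 5 → ℕ} {m : ℕ} (h0 : b 0 = 0)
    (hadj : ∀ i, b i + b (i + 1) ≤ m) : Scheme b m := by
  have h12 : b 1 + b 2 ≤ m := hadj 1
  have h23 : b 2 + b 3 ≤ m := hadj 2
  have h34 : b 3 + b 4 ≤ m := hadj 3
  set S2 : Finset ℕ := Finset.Ico (b 1) (b 1 + b 2) with hS2
  have hS2sub : S2 ⊆ Finset.range m := by
    intro x hx; rw [hS2, Finset.mem_Ico] at hx; rw [Finset.mem_range]; omega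
  have hS2card : S2.card = b 2 := by simp [hS2]
  obtain ⟨S3, hS3sub, hS3card⟩ : ∃ t ⊆ Finset.range m \ S2, t.card = b 3 := by
    apply Finset.exists_subset_card_eq
    rw [Finset.card_sdiff_of_subset hS2sub, Finset.card_range, hS2card]; omega
  have hS3sub' : S3 ⊆ Finset.range m := fun x hx => (Finset.mem_sdiff.mp (hS3sub hx)).1
  obtain ⟨S4, hS4sub, hS4card⟩ : ∃ t ⊆ Finset.range m \ S3, t.card = b 4 := by
    apply Finset.exists_subset_card_eq
    rw [Finset.card_sdiff_of_subset hS3sub', Finset.card_range, hS3card]; omega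
  refine ⟨![∅, Finset.range (b 1), S2, S3, S4], ?_, ?_, ?_⟩
  · intro i; fin_cases i
    · exact Finset.empty_subset _
    · intro x hx
      have hx' : x ∈ Finset.range (b 1) := hx
      rw [Finset.mem_range] at hx' ⊢; omega
    · exact hS2sub
    · exact hS3sub'
    · exact fun x hx => (Finset.mem_sdiff.mp (hS4sub hx)).1
  · intro i; fin_cases i
    · show (∅ : Finset ℕ).card = b 0; simp [h0]
    · exact Finset.card_range _
    · exact hS2card
    · exact hS3card
    · exact hS4card
  · intro i; fin_cases i
    · exact Finset.disjoint_empty_left _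
    · show Disjoint (Finset.range (b 1)) S2
      rw [Finset.disjoint_left]; intro x hx hx'
      rw [Finset.mem_range] at hx; rw [hS2, Finset.mem_Ico] at hx'; omega
    · show Disjoint S2 S3
      rw [disjoint_comm, Finset.disjoint_left]
      exact fun x hx hx' => (Finset.mem_sdiff.mp (hS3sub hx)).2 hx'
    · show Disjoint S3 S4
      rw [disjoint_comm, Finset.disjoint_left]
      exact fun x hx hx' => (Finset.mem_sdiff.mp (hS4sub hx)).2 hx'
    · exact Finset.disjoint_empty_right _

lemma scheme_main : ∀ (N : ℕ) (b : Fin 5 → ℕ) (m : ℕ), (∑ i, b i) = N →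
    (∀ i, b i + b (i + 1) ≤ m) → (∑ i, b i) ≤ 2 * m → Scheme b m := by
  intro N
  induction N using Nat.strong_induction_on with
  | _ N IH =>
    intro b m hsum hadj h2m
    by_cases hz : ∃ j, b j = 0
    · obtain ⟨j, hj⟩ := hz
      refine scheme_rot j (scheme_path ?_ ?_)
      · show b (0 + j) = 0; rw [zero_add]; exact hj
      · intro i
        have h := hadj (i + j)
        have : i + 1 + j = i + j + 1 := by abel
        rw [this]; exact h
    · push_neg at hz
      have hpos : ∀ j, 1 ≤ b j := fun j => Nat.one_le_iff_ne_zero.mpr (hz j)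
      have hgood : ∃ j, b j + b (j + 1) + 1 ≤ m := by
        by_contra hc
        push_neg at hc
        have e0 := hadj 0; have e1 := hadj 1; have e2 := hadj 2; have e3 := hadj 3
        have e4 := hadj 4
        have f0 := hc 0; have f1 := hc 1; have f2 := hc 2; have f3 := hc 3; have f4 := hc 4
        rw [Fin.sum_univ_five] at h2m
        have h01 : (0 : Fin 5) + 1 = 1 := rfl
        have h12 : (1 : Fin 5) + 1 = 2 := rfl
        have h23 : (2 : Fin 5) + 1 = 3 := rfl
        have h34 : (3 : Fin 5) + 1 = 4 := rfl
        have h40 : (4 : Fin 5) + 1 = 0 := rfl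
        rw [h01] at e0 f0; rw [h12] at e1 f1; rw [h23] at e2 f2; rw [h34] at e3 f3
        rw [h40] at e4 f4
        have := hpos 0
        omega
      obtain ⟨j, hj⟩ := hgood
      set b' : Fin 5 → ℕ := fun i => b (i + j) with hb'
      have hb'adj : ∀ i, b' i + b' (i + 1) ≤ m := by
        intro i
        have h := hadj (i + j)
        have : i + 1 + j = i + j + 1 := by abel
        show b (i + j) + b (i + 1 + j) ≤ m
        rw [this]; exact h
      have hb'pos : ∀ i, 1 ≤ b' i := fun i => hpos _
      have hb'sum : (∑ i, b' i) = N := by rw [hb', sum_rot]; exact hsum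
      have hb'good : b' 0 + b' 1 + 1 ≤ m := by
        show b (0 + j) + b (1 + j) + 1 ≤ m
        rw [zero_add, add_comm 1 j]; exact hj
      set b'' : Fin 5 → ℕ := fun i => if i = 2 then b' 2 - 1 else if i = 4 then b' 4 - 1 else b' i
        with hb''
      have hb''0 : b'' 0 = b' 0 := rfl
      have hb''1 : b'' 1 = b' 1 := rfl
      have hb''2 : b'' 2 = b' 2 - 1 := rfl
      have hb''3 : b'' 3 = b' 3 := rfl
      have hb''4 : b'' 4 = b' 4 - 1 := rfl
      have hp2 := hb'pos 2
      have hp4 := hb'pos 4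
      have hsum'' : (∑ i, b'' i) = N - 2 := by
        rw [Fin.sum_univ_five, hb''0, hb''1, hb''2, hb''3, hb''4]
        rw [Fin.sum_univ_five] at hb'sum
        omega
      have hNge : 2 ≤ N := by
        rw [Fin.sum_univ_five] at hb'sum
        omega
      have hmge : 1 ≤ m := by omega
      have e0 := hb'adj 0; have e1 := hb'adj 1; have e2 := hb'adj 2; have e3 := hb'adj 3
      have e4 := hb'adj 4
      rw [show (0 : Fin 5) + 1 = 1 from rfl] at e0
      rw [show (1 : Fin 5) + 1 = 2 from rfl] at e1
      rw [show (2 : Fin 5) + 1 = 3 from rfl] at e2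
      rw [show (3 : Fin 5) + 1 = 4 from rfl] at e3
      rw [show (4 : Fin 5) + 1 = 0 from rfl] at e4
      have hS'' : Scheme b'' (m - 1) := by
        apply IH (N - 2) (by omega) b'' (m - 1) hsum''
        · intro i; fin_cases i
          · show b'' 0 + b'' 1 ≤ m - 1; rw [hb''0, hb''1]; omega
          · show b'' 1 + b'' 2 ≤ m - 1; rw [hb''1, hb''2]; omega
          · show b'' 2 + b'' 3 ≤ m - 1; rw [hb''2, hb''3]; omega
          · show b'' 3 + b'' 4 ≤ m - 1; rw [hb''3, hb''4]; omega
          · show b'' 4 + b'' 0 ≤ m - 1; rw [hb''4, hb''0]; omega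
        · rw [hsum'']; omega
      obtain ⟨S, hSsub, hScard, hSdisj⟩ := hS''
      have hnotmem : ∀ i, m - 1 ∉ S i := by
        intro i hmem
        have := hSsub i hmem
        rw [Finset.mem_range] at this
        omega
      refine scheme_rot j ?_
      refine ⟨fun i => if i = 2 then insert (m-1) (S 2) else if i = 4 then insert (m-1) (S 4)
        else S i, ?_, ?_, ?_⟩
      · intro i
        have hsub' : ∀ k, S k ⊆ Finset.range m := fun k x hx => by
          have := hSsub k hx; rw [Finset.mem_range] at this ⊢; omega
        have hins : ∀ k, insert (m-1) (S k) ⊆ Finset.range m := by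
          intro k x hx
          rcases Finset.mem_insert.mp hx with h | h
          · rw [Finset.mem_range]; omega
          · exact hsub' k h
        by_cases h2 : i = 2
        · simp only [h2, if_pos rfl, if_true]; exact hins 2
        · by_cases h4 : i = 4
          · simp only [h4, if_neg (by decide : (4:Fin 5) ≠ 2), if_pos rfl, if_true]; exact hins 4
          · simp only [if_neg h2, if_neg h4]; exact hsub' i
      · intro i
        by_cases h2 : i = 2
        · simp only [h2, if_pos rfl, if_true]
          rw [Finset.card_insert_of_notMem (hnotmem 2), hScard 2, hb''2]
          show b' 2 - 1 + 1 = b' 2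
          omega
        · by_cases h4 : i = 4
          · simp only [h4, if_neg (by decide : (4:Fin 5) ≠ 2), if_pos rfl, if_true]
            rw [Finset.card_insert_of_notMem (hnotmem 4), hScard 4, hb''4]
            show b' 4 - 1 + 1 = b' 4
            omega
          · simp only [if_neg h2, if_neg h4]
            rw [hScard i]
            show b'' i = b' i
            rw [hb'']
            simp only [if_neg h2, if_neg h4]
      · intro i
        have d0 := hSdisj 0; have d1 := hSdisj 1; have d2 := hSdisj 2; have d3 := hSdisj 3
        have d4 := hSdisj 4
        rw [show (0 : Fin 5) + 1 = 1 from rfl] at d0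
        rw [show (1 : Fin 5) + 1 = 2 from rfl] at d1
        rw [show (2 : Fin 5) + 1 = 3 from rfl] at d2
        rw [show (3 : Fin 5) + 1 = 4 from rfl] at d3
        rw [show (4 : Fin 5) + 1 = 0 from rfl] at d4
        fin_cases i
        · show Disjoint (S 0) (S 1); exact d0
        · show Disjoint (S 1) (insert (m-1) (S 2))
          rw [Finset.disjoint_insert_right]
          exact ⟨hnotmem 1, d1⟩
        · show Disjoint (insert (m-1) (S 2)) (S 3)
          rw [Finset.disjoint_insert_left]
          exact ⟨hnotmem 3, d2⟩
        · show Disjoint (S 3) (insert (m-1) (S 4))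
          rw [Finset.disjoint_insert_right]
          exact ⟨hnotmem 3, d3⟩
        · show Disjoint (insert (m-1) (S 4)) (S 0)
          rw [Finset.disjoint_insert_left]
          exact ⟨hnotmem 0, d4⟩

lemma keyAux {V : Type*} (G : SimpleGraph V) (Bf : Fin 5 → Finset V) (S : Fin 5 → Finset ℕ)
    (φ : ∀ i : Fin 5, {x // x ∈ Bf i} ≃ {x // x ∈ S i})
    (hSdisj : ∀ i : Fin 5, Disjoint (S i) (S (i + 1)))
    (hBB2non : ∀ i : Fin 5, ∀ u ∈ Bf i, ∀ w ∈ Bf (i+2), ¬G.Adj u w) :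
    ∀ (i j : Fin 5) (x y : V) (px : x ∈ Bf i) (py : y ∈ Bf j), G.Adj x y →
      (↑(φ i ⟨x, px⟩) : ℕ) ≠ (↑(φ j ⟨y, py⟩) : ℕ) := by
  have hcases : ∀ a b : Fin 5, a = b ∨ a = b + 1 ∨ a = b + 2 ∨ a = b + 3 ∨ a = b + 4 := by decide
  intro i j x y px py hadj heq
  have hxS : (↑(φ i ⟨x, px⟩) : ℕ) ∈ S i := (φ i ⟨x, px⟩).2
  have hyS : (↑(φ j ⟨y, py⟩) : ℕ) ∈ S j := (φ j ⟨y, py⟩).2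
  rcases hcases j i with hij | hij | hij | hij | hij
  · subst hij
    exact hadj.ne (congrArg Subtype.val ((φ j).injective (Subtype.ext heq)))
  · subst hij
    rw [heq] at hxS
    exact Finset.disjoint_left.mp (hSdisj i) hxS hyS
  · subst hij
    exact hBB2non i x px y py hadj
  · subst hij
    have px' : x ∈ Bf (i + 3 + 2) := by
      rw [(by decide : ∀ a : Fin 5, a + 3 + 2 = a) i]; exact px
    exact hBB2non (i+3) y py x px' hadj.symm
  · subst hij
    have hd := hSdisj (i+4)
    rw [(by decide : ∀ a : Fin 5, a + 4 + 1 = a) i] at hd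
    rw [← heq] at hyS
    exact Finset.disjoint_left.mp hd hyS hxS

theorem caseA (n : ℕ) (V : Type) [instV : Fintype V] (G : SimpleGraph V)
    (IH : ∀ (V : Type) [Fintype V] (G : SimpleGraph V),
      Fintype.card V ≤ n →
      ¬HasCopy (pathGraph 5) G → ¬HasCopy (cycleGraph 4) G →
      G.Colorable ((5 * G.cliqueNum + 2) / 4))
    (hcard : Fintype.card V ≤ n + 1)
    (hP5 : ¬HasCopy (pathGraph 5) G) (hC4 : ¬HasCopy (cycleGraph 4) G)
    (hC5 : HasCopy (cycleGraph 5) G) :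
    G.Colorable ((5 * G.cliqueNum + 2) / 4) := by
  classical
  obtain ⟨v, hvinj, hvadj⟩ := hC5
  have hC5adj : ∀ i j : Fin 5, (cycleGraph 5).Adj i j ↔ (j = i + 1 ∨ i = j + 1) := by decide
  have hvadj' : ∀ i j : Fin 5, G.Adj (v i) (v j) ↔ (j = i + 1 ∨ i = j + 1) :=
    fun i j => (hvadj i j).trans (hC5adj i j)
  have hvne : ∀ i j : Fin 5, i ≠ j → v i ≠ v j := fun i j hij h => hij (hvinj h)
  have cyc01 : ∀ i : Fin 5, G.Adj (v i) (v (i + 1)) :=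
    fun i => (hvadj' i (i + 1)).mpr (Or.inl rfl)
  have cyc02 : ∀ i : Fin 5, ¬G.Adj (v i) (v (i + 2)) := by
    intro i h
    rcases (hvadj' _ _).mp h with h' | h'
    · exact (by decide : ∀ a : Fin 5, ¬(a + 2 = a + 1)) i h'
    · exact (by decide : ∀ a : Fin 5, ¬(a = a + 2 + 1)) i h'
  have cyc03 : ∀ i : Fin 5, ¬G.Adj (v i) (v (i + 3)) := by
    intro i h
    rcases (hvadj' _ _).mp h with h' | h'
    · exact (by decide : ∀ a : Fin 5, ¬(a + 3 = a + 1)) i h'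
    · exact (by decide : ∀ a : Fin 5, ¬(a = a + 3 + 1)) i h'
  have f11 : ∀ a : Fin 5, a + 1 + 1 = a + 2 := by decide
  have f21 : ∀ a : Fin 5, a + 2 + 1 = a + 3 := by decide
  have f31 : ∀ a : Fin 5, a + 3 + 1 = a + 4 := by decide
  have f41 : ∀ a : Fin 5, a + 4 + 1 = a := by decide
  have f12 : ∀ a : Fin 5, a + 1 + 2 = a + 3 := by decide
  have f22 : ∀ a : Fin 5, a + 2 + 2 = a + 4 := by decide
  have f32 : ∀ a : Fin 5, a + 3 + 2 = a := by decide
  have f42 : ∀ a : Fin 5, a + 4 + 2 = a + 1 := by decide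
  have f13 : ∀ a : Fin 5, a + 1 + 3 = a + 4 := by decide
  have f23 : ∀ a : Fin 5, a + 2 + 3 = a := by decide
  have f14 : ∀ a : Fin 5, a + 1 + 4 = a := by decide
  -- the pieces of the partition
  set Tf : Finset V :=
    Finset.univ.filter (fun u => (∀ j, u ≠ v j) ∧ ∀ i, G.Adj u (v i)) with hTf
  set Rf : Finset V :=
    Finset.univ.filter (fun u => (∀ j, u ≠ v j) ∧ ∀ i, ¬G.Adj u (v i)) with hRf
  set Bf : Fin 5 → Finset V := fun i =>
    Finset.univ.filter (fun u => u = v i ∨ ((∀ j, u ≠ v j) ∧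
      G.Adj u (v (i+4)) ∧ G.Adj u (v i) ∧ G.Adj u (v (i+1)) ∧
      ¬G.Adj u (v (i+2)) ∧ ¬G.Adj u (v (i+3)))) with hBf
  have hTmem : ∀ u, u ∈ Tf ↔ ((∀ j, u ≠ v j) ∧ ∀ i, G.Adj u (v i)) := by
    intro u; simp [hTf]
  have hRmem : ∀ u, u ∈ Rf ↔ ((∀ j, u ≠ v j) ∧ ∀ i, ¬G.Adj u (v i)) := by
    intro u; simp [hRf]
  have hBmem : ∀ i u, u ∈ Bf i ↔ (u = v i ∨ ((∀ j, u ≠ v j) ∧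
      G.Adj u (v (i+4)) ∧ G.Adj u (v i) ∧ G.Adj u (v (i+1)) ∧
      ¬G.Adj u (v (i+2)) ∧ ¬G.Adj u (v (i+3)))) := by
    intro i u; simp [hBf]
  -- structural lemmas
  have hBclique : ∀ i : Fin 5, ∀ u ∈ Bf i, ∀ w ∈ Bf i, u ≠ w → G.Adj u w := by
    intro i u hu w hw hne
    rcases (hBmem i u).mp hu with rfl | ⟨hur, hu1, hu2, hu3, hu4, hu5⟩
    · rcases (hBmem i w).mp hw with rfl | ⟨hwr, hw1, hw2, hw3, hw4, hw5⟩
      · exact absurd rfl hne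
      · exact hw2.symm
    · rcases (hBmem i w).mp hw with rfl | ⟨hwr, hw1, hw2, hw3, hw4, hw5⟩
      · exact hu2
      · by_contra hnadj
        apply hC4
        refine hasCopy_C4 u (v (i+4)) w (v (i+1)) hu1 hw1.symm hw3 hu3.symm hnadj ?_ hne ?_
        · have h := cyc02 (i+4); rw [f42 i] at h; exact h
        · exact hvne _ _ ((by decide : ∀ a : Fin 5, a + 4 ≠ a + 1) i)
  have hBBadj : ∀ i : Fin 5, ∀ u ∈ Bf i, ∀ w ∈ Bf (i+1), G.Adj u w := by
    intro i u hu w hw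
    rcases (hBmem i u).mp hu with rfl | ⟨hur, hu1, hu2, hu3, hu4, hu5⟩
    · rcases (hBmem (i+1) w).mp hw with rfl | ⟨hwr, hw1, hw2, hw3, hw4, hw5⟩
      · exact cyc01 i
      · have h := hw1; rw [f14 i] at h; exact h.symm
    · rcases (hBmem (i+1) w).mp hw with rfl | ⟨hwr, hw1, hw2, hw3, hw4, hw5⟩
      · exact hu3
      · have hneuw : u ≠ w := by
          intro h
          subst h
          have h2 := hw3; rw [f11 i] at h2
          exact hu4 h2
        by_contra hnadj
        apply hP5
        have e2 : G.Adj (v (i+4)) (v (i+3)) := by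
          have h := cyc01 (i+3); rw [f31 i] at h; exact h.symm
        have e3 : G.Adj (v (i+3)) (v (i+2)) := by
          have h := cyc01 (i+2); rw [f21 i] at h; exact h.symm
        have e4 : G.Adj (v (i+2)) w := by
          have h := hw3; rw [f11 i] at h; exact h.symm
        have nbd : ¬G.Adj (v (i+4)) (v (i+2)) := by
          have h := cyc02 (i+2); rw [f22 i] at h; exact fun h' => h h'.symm
        have nbe : ¬G.Adj (v (i+4)) w := by
          have h := hw5; rw [f13 i] at h; exact fun h' => h h'.symm
        have nce : ¬G.Adj (v (i+3)) w := by
          have h := hw4; rw [f12 i] at h; exact fun h' => h h'.symm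
        exact hasCopy_P5 u (v (i+4)) (v (i+3)) (v (i+2)) w hu1 e2 e3 e4
          hu5 hu4 hnadj nbd nbe nce
          (hur (i+3)) (hur (i+2)) hneuw
          (hvne _ _ ((by decide : ∀ a : Fin 5, a + 4 ≠ a + 2) i))
          (fun h => hwr (i+4) h.symm) (fun h => hwr (i+3) h.symm)
  have hBB2non : ∀ i : Fin 5, ∀ u ∈ Bf i, ∀ w ∈ Bf (i+2), ¬G.Adj u w := by
    intro i u hu w hw hadj
    rcases (hBmem i u).mp hu with rfl | ⟨hur, hu1, hu2, hu3, hu4, hu5⟩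
    · rcases (hBmem (i+2) w).mp hw with rfl | ⟨hwr, hw1, hw2, hw3, hw4, hw5⟩
      · exact cyc02 i hadj
      · have h := hw5; rw [f23 i] at h; exact h hadj.symm
    · rcases (hBmem (i+2) w).mp hw with rfl | ⟨hwr, hw1, hw2, hw3, hw4, hw5⟩
      · exact hu4 hadj
      · apply hC4
        have e2 : G.Adj w (v (i+3)) := by have h := hw3; rw [f21 i] at h; exact h
        have e3 : G.Adj (v (i+3)) (v (i+4)) := by have h := cyc01 (i+3); rw [f31 i] at h; exact h
        have nbd : ¬G.Adj w (v (i+4)) := by have h := hw4; rw [f22 i] at h; exact h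
        exact hasCopy_C4 u w (v (i+3)) (v (i+4)) hadj e2 e3 hu1.symm hu5 nbd
          (hur (i+3)) (hwr (i+4))
  have hTclique : ∀ u ∈ Tf, ∀ w ∈ Tf, u ≠ w → G.Adj u w := by
    intro u hu w hw hne
    obtain ⟨hur, hua⟩ := (hTmem u).mp hu
    obtain ⟨hwr, hwa⟩ := (hTmem w).mp hw
    by_contra hnadj
    apply hC4
    exact hasCopy_C4 u (v 0) w (v 2) (hua 0) (hwa 0).symm (hwa 2) (hua 2).symm
      hnadj (cyc02 0) hne (hvne 0 2 (by decide))
  have hTB : ∀ i : Fin 5, ∀ u ∈ Tf, ∀ w ∈ Bf i, G.Adj u w := by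
    intro i u hu w hw
    obtain ⟨hur, hua⟩ := (hTmem u).mp hu
    rcases (hBmem i w).mp hw with rfl | ⟨hwr, hw1, hw2, hw3, hw4, hw5⟩
    · exact hua i
    · have hne : u ≠ w := by
        intro h; subst h
        exact hw4 (hua (i+2))
      by_contra hnadj
      apply hC4
      have nbd : ¬G.Adj (v (i+4)) (v (i+1)) := by
        have h := cyc02 (i+4); rw [f42 i] at h; exact h
      exact hasCopy_C4 u (v (i+4)) w (v (i+1)) (hua (i+4)) hw1.symm hw3
        (hua (i+1)).symm hnadj nbd hne (hvne _ _ ((by decide : ∀ a : Fin 5, a + 4 ≠ a + 1) i))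
  have hRB : ∀ i : Fin 5, ∀ u ∈ Rf, ∀ w ∈ Bf i, ¬G.Adj u w := by
    intro i u hu w hw hadj
    obtain ⟨hur, hun⟩ := (hRmem u).mp hu
    rcases (hBmem i w).mp hw with rfl | ⟨hwr, hw1, hw2, hw3, hw4, hw5⟩
    · exact hun i hadj
    · apply hP5
      have e3 : G.Adj (v (i+1)) (v (i+2)) := by have h := cyc01 (i+1); rw [f11 i] at h; exact h
      have e4 : G.Adj (v (i+2)) (v (i+3)) := by have h := cyc01 (i+2); rw [f21 i] at h; exact h
      have nce : ¬G.Adj (v (i+1)) (v (i+3)) := by have h := cyc02 (i+1); rw [f12 i] at h; exact h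
      exact hasCopy_P5 u w (v (i+1)) (v (i+2)) (v (i+3)) hadj hw3 e3 e4
        (hun (i+1)) (hun (i+2)) (hun (i+3)) hw4 hw5 nce
        (hur (i+1)) (hur (i+2)) (hur (i+3)) (hwr (i+2)) (hwr (i+3))
        (hvne _ _ ((by decide : ∀ a : Fin 5, a + 1 ≠ a + 3) i))
  have hcases : ∀ a b : Fin 5, a = b ∨ a = b + 1 ∨ a = b + 2 ∨ a = b + 3 ∨ a = b + 4 := by decide
  have hMidu : ∀ (u : V) (i j : Fin 5),
      (G.Adj u (v (i+4)) ∧ G.Adj u (v i) ∧ G.Adj u (v (i+1)) ∧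
        ¬G.Adj u (v (i+2)) ∧ ¬G.Adj u (v (i+3))) →
      (G.Adj u (v (j+4)) ∧ G.Adj u (v j) ∧ G.Adj u (v (j+1)) ∧
        ¬G.Adj u (v (j+2)) ∧ ¬G.Adj u (v (j+3))) → i = j := by
    intro u i j hi hj
    rcases hcases j i with h | h | h | h | h
    · exact h.symm
    · subst h
      exfalso
      have h2 := hj.2.2.1; rw [f11 i] at h2
      exact hi.2.2.2.1 h2
    · subst h
      exact absurd hj.2.1 hi.2.2.2.1
    · subst h
      exact absurd hj.2.1 hi.2.2.2.2
    · subst h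
      exfalso
      have h2 := hj.2.2.2.1; rw [f42 i] at h2
      exact h2 hi.2.2.1
  have hdisjBB : ∀ i j : Fin 5, i ≠ j → Disjoint (Bf i) (Bf j) := by
    intro i j hne
    rw [Finset.disjoint_left]
    intro u hui huj
    rcases (hBmem i u).mp hui with rfl | ⟨hur, humid⟩
    · rcases (hBmem j (v i)).mp huj with hh | ⟨hwr, hwmid⟩
      · exact hvne i j hne hh
      · exact hwr i rfl
    · rcases (hBmem j u).mp huj with rfl | ⟨hwr, hwmid⟩
      · exact hur j rfl
      · exact hne (hMidu u i j humid hwmid)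
  have hdisjTB : ∀ i : Fin 5, Disjoint Tf (Bf i) := by
    intro i; rw [Finset.disjoint_left]
    intro u hut hub
    obtain ⟨hur, hua⟩ := (hTmem u).mp hut
    rcases (hBmem i u).mp hub with rfl | ⟨hbr, hb1, hb2, hb3, hb4, hb5⟩
    · exact hur i rfl
    · exact hb4 (hua (i+2))
  -- classification of outside vertices
  have classify : ∀ u : V, (∀ j, u ≠ v j) →
      (∀ i, ¬ G.Adj u (v i)) ∨ (∀ i, G.Adj u (v i)) ∨
      (∃ i, G.Adj u (v (i+4)) ∧ G.Adj u (v i) ∧ G.Adj u (v (i+1)) ∧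
        ¬G.Adj u (v (i+2)) ∧ ¬G.Adj u (v (i+3))) := by
    intro u hne
    have badP5 : ∀ kk : Fin 5, G.Adj u (v kk) → ¬G.Adj u (v (kk+1)) → ¬G.Adj u (v (kk+2)) →
        ¬G.Adj u (v (kk+3)) → False := by
      intro kk ha n1 n2 n3
      apply hP5
      have e2 : G.Adj (v (kk+1)) (v (kk+2)) := by have h := cyc01 (kk+1); rw [f11 kk] at h; exact h
      have e3 : G.Adj (v (kk+2)) (v (kk+3)) := by have h := cyc01 (kk+2); rw [f21 kk] at h; exact h
      have nce : ¬G.Adj (v (kk+1)) (v (kk+3)) := by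
        have h := cyc02 (kk+1); rw [f12 kk] at h; exact h
      exact hasCopy_P5 u (v kk) (v (kk+1)) (v (kk+2)) (v (kk+3)) ha (cyc01 kk) e2 e3
        n1 n2 n3 (cyc02 kk) (cyc03 kk) nce
        (hne (kk+1)) (hne (kk+2)) (hne (kk+3))
        (hvne _ _ ((by decide : ∀ a : Fin 5, a ≠ a + 2) kk))
        (hvne _ _ ((by decide : ∀ a : Fin 5, a ≠ a + 3) kk))
        (hvne _ _ ((by decide : ∀ a : Fin 5, a + 1 ≠ a + 3) kk))
    have badC4 : ∀ kk : Fin 5, G.Adj u (v kk) → G.Adj u (v (kk+2)) → ¬G.Adj u (v (kk+1)) →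
        False := by
      intro kk h1 h2 hn
      apply hC4
      have e2 : G.Adj (v (kk+1)) (v (kk+2)) := by have h := cyc01 (kk+1); rw [f11 kk] at h; exact h
      exact hasCopy_C4 u (v kk) (v (kk+1)) (v (kk+2)) h1 (cyc01 kk) e2 h2.symm hn (cyc02 kk)
        (hne (kk+1)) (hvne _ _ ((by decide : ∀ a : Fin 5, a ≠ a + 2) kk))
    by_cases h0 : G.Adj u (v 0) <;> by_cases h1 : G.Adj u (v 1) <;>
      by_cases h2 : G.Adj u (v 2) <;> by_cases h3 : G.Adj u (v 3) <;>
      by_cases h4 : G.Adj u (v 4) <;>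
    first
      | (refine Or.inr (Or.inl ?_); intro i; fin_cases i <;>
          first | exact h0 | exact h1 | exact h2 | exact h3 | exact h4)
      | (refine Or.inl ?_; intro i; fin_cases i <;>
          first | exact h0 | exact h1 | exact h2 | exact h3 | exact h4)
      | exact Or.inr (Or.inr ⟨0, h4, h0, h1, h2, h3⟩)
      | exact Or.inr (Or.inr ⟨1, h0, h1, h2, h3, h4⟩)
      | exact Or.inr (Or.inr ⟨2, h1, h2, h3, h4, h0⟩)
      | exact Or.inr (Or.inr ⟨3, h2, h3, h4, h0, h1⟩)
      | exact Or.inr (Or.inr ⟨4, h3, h4, h0, h1, h2⟩)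
      | exact (badP5 0 h0 h1 h2 h3).elim
      | exact (badP5 1 h1 h2 h3 h4).elim
      | exact (badP5 2 h2 h3 h4 h0).elim
      | exact (badP5 3 h3 h4 h0 h1).elim
      | exact (badP5 4 h4 h0 h1 h2).elim
      | exact (badC4 0 h0 h2 h1).elim
      | exact (badC4 1 h1 h3 h2).elim
      | exact (badC4 2 h2 h4 h3).elim
      | exact (badC4 3 h3 h0 h4).elim
      | exact (badC4 4 h4 h1 h0).elim
  have hpart : ∀ u : V, u ∉ Tf ∪ Rf → ∃ i, u ∈ Bf i := by
    intro u hu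
    by_cases hr : ∀ j, u ≠ v j
    · rcases classify u hr with hnone | hall | ⟨i, hmid⟩
      · exact absurd (Finset.mem_union_right _ ((hRmem u).mpr ⟨hr, hnone⟩)) hu
      · exact absurd (Finset.mem_union_left _ ((hTmem u).mpr ⟨hr, hall⟩)) hu
      · exact ⟨i, (hBmem i u).mpr (Or.inr ⟨hr, hmid⟩)⟩
    · push_neg at hr
      obtain ⟨j, hj⟩ := hr
      exact ⟨j, (hBmem j u).mpr (Or.inl hj)⟩
  -- numbers
  set t := Tf.card with ht
  set b : Fin 5 → ℕ := fun i => (Bf i).card with hb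
  have hclq : ∀ i : Fin 5, b i + b (i+1) + t ≤ G.cliqueNum := by
    intro i
    have hne1 : i ≠ i + 1 := (by decide : ∀ a : Fin 5, a ≠ a + 1) i
    have hK : G.IsClique ↑(Bf i ∪ Bf (i+1) ∪ Tf) := by
      intro x hx y hy hne
      simp only [Finset.coe_union, Set.mem_union, Finset.mem_coe] at hx hy
      rcases hx with (hx | hx) | hx <;> rcases hy with (hy | hy) | hy
      · exact hBclique i x hx y hy hne
      · exact hBBadj i x hx y hy
      · exact (hTB i y hy x hx).symm
      · exact (hBBadj i y hy x hx).symm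
      · exact hBclique (i+1) x hx y hy hne
      · exact (hTB (i+1) y hy x hx).symm
      · exact hTB i x hx y hy
      · exact hTB (i+1) x hx y hy
      · exact hTclique x hx y hy hne
    have hdisj1 : Disjoint (Bf i ∪ Bf (i+1)) Tf := by
      rw [Finset.disjoint_union_left]
      exact ⟨(hdisjTB i).symm, (hdisjTB (i+1)).symm⟩
    have hcardK : (Bf i ∪ Bf (i+1) ∪ Tf).card = b i + b (i+1) + t := by
      rw [Finset.card_union_of_disjoint hdisj1,
        Finset.card_union_of_disjoint (hdisjBB i (i+1) hne1)]
    have := IsClique.card_le_cliqueNum (tc := hK)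
    rw [hcardK] at this
    exact this
  have hc0 : b 0 + b 1 + t ≤ G.cliqueNum := hclq 0
  have hc1 : b 1 + b 2 + t ≤ G.cliqueNum := hclq 1
  have hc2 : b 2 + b 3 + t ≤ G.cliqueNum := hclq 2
  have hc3 : b 3 + b 4 + t ≤ G.cliqueNum := hclq 3
  have hc4' : b 4 + b 0 + t ≤ G.cliqueNum := hclq 4
  have hb0pos : 1 ≤ b 0 := by
    rw [hb]
    refine Finset.card_pos.mpr ⟨v 0, ?_⟩
    exact (hBmem 0 (v 0)).mpr (Or.inl rfl)
  set k := (5 * G.cliqueNum + 2) / 4 with hk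
  set m := k - t with hm
  have hdiv := Nat.div_add_mod (5 * G.cliqueNum + 2) 4
  have hsch : Scheme b m := by
    apply scheme_main (∑ i, b i) b m rfl
    · intro i
      have h := hclq i
      omega
    · rw [Fin.sum_univ_five]
      omega
  obtain ⟨S, hSsub, hScard, hSdisj⟩ := hsch
  -- recursion on T ∪ R
  have hv0TR : v 0 ∉ Tf ∪ Rf := by
    intro h
    rcases Finset.mem_union.mp h with h | h
    · exact ((hTmem _).mp h).1 0 rfl
    · exact ((hRmem _).mp h).1 0 rfl
  have hTRlt : (Tf ∪ Rf).card < Fintype.card V := by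
    rw [← Finset.card_univ]
    apply Finset.card_lt_card
    rw [Finset.ssubset_univ_iff]
    intro h
    exact hv0TR (h ▸ Finset.mem_univ (v 0))
  have hcardTR : Fintype.card ↥(↑(Tf ∪ Rf) : Set V) ≤ n := by
    have h1 : Fintype.card ↥(↑(Tf ∪ Rf) : Set V) = (Tf ∪ Rf).card := by
      rw [← Fintype.card_coe (Tf ∪ Rf)]
      exact Fintype.card_congr (Equiv.subtypeEquivRight (fun x => by simp))
    omega
  have hcol2 : (G.induce ↑(Tf ∪ Rf)).Colorable k := by
    have h := IH ↥(↑(Tf ∪ Rf) : Set V) (G.induce ↑(Tf ∪ Rf)) hcardTR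
      (fun h => hP5 h.of_induce) (fun h => hC4 h.of_induce)
    apply h.mono
    have h1 := cliqueNum_induce_le G (↑(Tf ∪ Rf) : Set V)
    omega
  obtain ⟨C2⟩ := hcol2
  -- colours used on T
  set usedT : Finset (Fin k) :=
    Tf.attach.image (fun u => C2 ⟨u.1, Finset.mem_coe.mpr (Finset.mem_union_left _ u.2)⟩)
    with husedT
  have husedTcard : usedT.card = t := by
    rw [husedT, Finset.card_image_of_injOn, Finset.card_attach]
    intro x _ y _ hCeq
    by_contra hne
    have hne' : x.1 ≠ y.1 := fun h => hne (Subtype.ext h)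
    have hadj := hTclique x.1 x.2 y.1 y.2 hne'
    exact C2.valid (by exact hadj :
      (G.induce ↑(Tf ∪ Rf)).Adj ⟨x.1, Finset.mem_coe.mpr (Finset.mem_union_left _ x.2)⟩
        ⟨y.1, Finset.mem_coe.mpr (Finset.mem_union_left _ y.2)⟩) hCeq
  have htk : t ≤ k := by have := hclq 0; omega
  set freeC : Finset (Fin k) := Finset.univ \ usedT with hfreeC
  have hfreecard : freeC.card = m := by
    rw [hfreeC, Finset.card_sdiff_of_subset (Finset.subset_univ _), Finset.card_univ, Fintype.card_fin,
      husedTcard]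
  have hfreemem : ∀ c : Fin k, c ∈ freeC → c ∉ usedT := by
    intro c hc
    rw [hfreeC, Finset.mem_sdiff] at hc
    exact hc.2
  set ε := freeC.orderIsoOfFin hfreecard with hε
  have hφcard : ∀ i : Fin 5, (Bf i).card = (S i).card := by
    intro i
    have h := hScard i
    rw [hb] at h
    exact h.symm
  set φ : ∀ i : Fin 5, {x // x ∈ Bf i} ≃ {x // x ∈ S i} :=
    fun i => Finset.equivOfCardEq (hφcard i) with hφ
  set idxT : V → Fin 5 := fun u => if h : ∃ i0, u ∈ Bf i0 then h.choose else 0 with hidxTdef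
  have hidxT : ∀ u : V, (∃ i0, u ∈ Bf i0) → u ∈ Bf (idxT u) := by
    intro u h
    rw [hidxTdef]
    dsimp only
    rw [dif_pos h]
    exact h.choose_spec
  have key : ∀ x y : V, G.Adj x y → ∀ (hex : ∃ i0, x ∈ Bf i0) (hey : ∃ i0, y ∈ Bf i0),
      (↑(φ (idxT x) ⟨x, hidxT x hex⟩) : ℕ) ≠ (↑(φ (idxT y) ⟨y, hidxT y hey⟩) : ℕ) :=
    fun x y hadj hex hey =>
      keyAux G Bf S φ hSdisj hBB2non (idxT x) (idxT y) x y (hidxT x hex) (hidxT y hey) hadj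
  have hφmem : ∀ (u : V) (hu : ∃ i0, u ∈ Bf i0),
      (↑(φ (idxT u) ⟨u, hidxT u hu⟩) : ℕ) < m :=
    fun u hu => Finset.mem_range.mp (hSsub _ (φ (idxT u) ⟨u, hidxT u hu⟩).2)
  refine ⟨Coloring.mk (fun u =>
    if hu : u ∈ Tf ∪ Rf then C2 ⟨u, Finset.mem_coe.mpr hu⟩
    else ↑(ε ⟨↑(φ (idxT u) ⟨u, hidxT u (hpart u hu)⟩), hφmem u (hpart u hu)⟩)) ?_⟩
  intro x y hadj
  split_ifs with hx hy hy
  · exact C2.valid (by exact hadj :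
      (G.induce ↑(Tf ∪ Rf)).Adj ⟨x, Finset.mem_coe.mpr hx⟩ ⟨y, Finset.mem_coe.mpr hy⟩)
  · rcases Finset.mem_union.mp hx with hxT | hxR
    · intro hcontra
      have hmem : C2 ⟨x, Finset.mem_coe.mpr hx⟩ ∈ usedT := by
        rw [husedT]
        exact Finset.mem_image.mpr ⟨⟨x, hxT⟩, Finset.mem_attach _ _, rfl⟩
      have hfree := hfreemem _ (ε ⟨↑(φ (idxT y) ⟨y, hidxT y (hpart y hy)⟩),
        hφmem y (hpart y hy)⟩).2
      exact hfree (hcontra ▸ hmem)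
    · exact absurd hadj (hRB (idxT y) x hxR y (hidxT y (hpart y hy)))
  · rcases Finset.mem_union.mp hy with hyT | hyR
    · intro hcontra
      have hmem : C2 ⟨y, Finset.mem_coe.mpr hy⟩ ∈ usedT := by
        rw [husedT]
        exact Finset.mem_image.mpr ⟨⟨y, hyT⟩, Finset.mem_attach _ _, rfl⟩
      have hfree := hfreemem _ (ε ⟨↑(φ (idxT x) ⟨x, hidxT x (hpart x hx)⟩),
        hφmem x (hpart x hx)⟩).2
      exact hfree (hcontra ▸ hmem)
    · exact absurd hadj.symm (hRB (idxT x) y hyR x (hidxT x (hpart x hx)))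
  · intro hcontra
    exact key x y hadj (hpart x hx) (hpart y hy)
      (congrArg Fin.val (ε.injective (Subtype.ext hcontra)))

theorem main_aux : ∀ (n : ℕ) (V : Type) [Fintype V] (G : SimpleGraph V),
    Fintype.card V ≤ n →
    ¬HasCopy (pathGraph 5) G → ¬HasCopy (cycleGraph 4) G →
    G.Colorable ((5 * G.cliqueNum + 2) / 4) := by
  intro n
  induction n with
  | zero =>
    intro V _ G hcard _ _
    have : IsEmpty V := by
      rw [← Fintype.card_eq_zero_iff]; omega
    exact Colorable.of_isEmpty (G := G) _
  | succ n IH =>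
    intro V instV G hcard hP5 hC4
    classical
    by_cases hVne : Nonempty V
    swap
    · have : IsEmpty V := not_nonempty_iff.mp hVne
      exact Colorable.of_isEmpty (G := G) _
    by_cases hC5 : HasCopy (cycleGraph 5) G
    · exact caseA n V G (fun V' _ G' h1 h2 h3 => IH V' G' h1 h2 h3) hcard hP5 hC4 hC5
    · -- CASE B : simplicial vertex
      obtain ⟨w, hw⟩ := exists_simplicial hP5 hC4 hC5
      set s : Set V := {u | u ≠ w} with hs
      have hcards : Fintype.card s < Fintype.card V := by
        have : Fintype.card s = Fintype.card {u : V // ¬ u = w} := rfl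
        rw [this, Fintype.card_subtype_compl, Fintype.card_subtype_eq]
        have : 0 < Fintype.card V := Fintype.card_pos
        omega
      have hcol : (G.induce s).Colorable ((5 * (G.induce s).cliqueNum + 2) / 4) :=
        IH s (G.induce s) (by omega) (fun h => hP5 h.of_induce) (fun h => hC4 h.of_induce)
      set k := (5 * G.cliqueNum + 2) / 4 with hk
      have homega : G.cliqueNum ≤ k := by
        have := Nat.div_add_mod (5 * G.cliqueNum + 2) 4
        omega
      have hcol2 : (G.induce s).Colorable k := by
        apply hcol.mono
        have h1 : (G.induce s).cliqueNum ≤ G.cliqueNum := cliqueNum_induce_le G s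
        rw [hk]
        omega
      obtain ⟨C⟩ := hcol2
      -- the closed neighbourhood of w is a clique
      have hclq : G.IsClique (insert w (G.neighborFinset w) : Finset V) := by
        intro x hx y hy hxy
        simp only [Finset.coe_insert, Set.mem_insert_iff, Finset.mem_coe,
          mem_neighborFinset] at hx hy
        rcases hx with rfl | hx
        · rcases hy with rfl | hy
          · exact absurd rfl hxy
          · exact hy
        · rcases hy with rfl | hy
          · exact hx.symm
          · exact hw x y hx hy hxy
      have hdeg : (G.neighborFinset w).card + 1 ≤ G.cliqueNum := by
        have hcard' : (insert w (G.neighborFinset w)).card = (G.neighborFinset w).card + 1 := by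
          rw [Finset.card_insert_of_notMem (by simp)]
        have := IsClique.card_le_cliqueNum (tc := hclq)
        omega
      set used : Finset (Fin k) :=
        (G.neighborFinset w).attach.image
          (fun u => C ⟨u.1, (G.ne_of_adj ((mem_neighborFinset G w u.1).mp u.2)).symm⟩) with hused
      have husedcard : used.card < k := by
        calc used.card ≤ (G.neighborFinset w).attach.card := Finset.card_image_le
          _ = (G.neighborFinset w).card := Finset.card_attach
          _ < k := by omega
      obtain ⟨a, ha⟩ : ∃ a : Fin k, a ∉ used := by
        by_contra h
        push_neg at h
        have : (Finset.univ : Finset (Fin k)) ⊆ used := fun a _ => h a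
        have := Finset.card_le_card this
        rw [Finset.card_univ, Fintype.card_fin] at this
        omega
      refine ⟨Coloring.mk (fun u => if h : u = w then a else C ⟨u, h⟩) ?_⟩
      intro x y hxy
      split_ifs with h1 h2 h2
      · exact absurd (h1 ▸ h2 ▸ hxy) G.irrefl
      · intro hcontra
        apply ha
        rw [hcontra, hused]
        exact Finset.mem_image.mpr ⟨⟨y, (mem_neighborFinset G w y).mpr (h1 ▸ hxy)⟩,
          Finset.mem_attach _ _, rfl⟩
      · intro hcontra
        apply ha
        rw [← hcontra, hused]
        exact Finset.mem_image.mpr ⟨⟨x, (mem_neighborFinset G w x).mpr (h2 ▸ hxy.symm)⟩,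
          Finset.mem_attach _ _, rfl⟩
      · exact C.valid (by exact hxy : (G.induce s).Adj ⟨x, h1⟩ ⟨y, h2⟩)


/-- Every finite `(P₅, C₄)`-free graph `G` with at least one vertex satisfies
`χ(G) ≤ ⌈(5·ω(G) − 1)/4⌉`. -/
theorem stmt3 {V : Type} [Fintype V] [Nonempty V] (G : SimpleGraph V)
    (hP5 : IndFree (pathGraph 5) G) (hC4 : IndFree (cycleGraph 4) G) :
    G.chromaticNumber ≤ (((5 * G.cliqueNum - 1 + 3) / 4 : ℕ) : ℕ∞) := by
  rw [SimpleGraph.chromaticNumber_le_iff_colorable]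
  have h := main_aux (Fintype.card V) V G le_rfl hP5.not_hasCopy hC4.not_hasCopy
  apply h.mono
  have hω : 1 ≤ G.cliqueNum := by
    obtain ⟨x⟩ := ‹Nonempty V›
    have hclq : G.IsClique (({x} : Finset V) : Set V) := by
      simp [SimpleGraph.isClique_iff, Set.pairwise_singleton]
    have := SimpleGraph.IsClique.card_le_cliqueNum (tc := hclq)
    simpa using this
  omega

end AuxProof
end

section
/- For every positive integer ω there exists a finite (P5, C4)-free graph G with clique number ω(G) = ω and chromatic number χ(G) = ⌈(5ω − 1)/4⌉. -/
open SimpleGraph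

/-- adjacency of the 5-cycle on blob indices -/
def Nrel (i j : Fin 5) : Prop := j = i + 1 ∨ i = j + 1

instance : DecidableRel Nrel := fun _ _ => inferInstanceAs (Decidable (_ ∨ _))

lemma Nrel_symm {i j : Fin 5} (h : Nrel i j) : Nrel j i := h.symm

lemma master (n k ωv z : ℕ) (q y : Fin 5 → ℕ) (β : Fin n → Fin 5) (μ : Fin n → ℕ)
    (hinj : ∀ a b : Fin n, β a = β b → μ a = μ b → a = b)
    (hμ : ∀ a : Fin n, μ a < q (β a))
    (hsurj : ∀ j : Fin 5, ∀ t : ℕ, t < q j → ∃ a : Fin n, β a = j ∧ μ a = t)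
    (hz : z ≤ 1)
    (hq : ∀ j : Fin 5, q j = y j + y (j + 3) + (if j = 0 then z else 0))
    (hqω : ∀ i j : Fin 5, Nrel i j → q i + q j ≤ ωv)
    (hwit : ∃ i : Fin 5, q i + q (i + 1) = ωv)
    (hk : k = (∑ i, y i) + z)
    (hn : 2 * k ≤ n + 1) :
    ∃ G : SimpleGraph (Fin n), IndFree (pathGraph 5) G ∧ IndFree (cycleGraph 4) G ∧
      G.cliqueNum = ωv ∧ G.chromaticNumber = (k : ℕ∞) := by
  classical
  set G : SimpleGraph (Fin n) :=
    { Adj := fun a b => a ≠ b ∧ (β a = β b ∨ Nrel (β a) (β b)),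
      symm := by
        constructor
        rintro a b ⟨h1, h2⟩
        exact ⟨h1.symm, by rcases h2 with h | h; exact Or.inl h.symm; exact Or.inr (Nrel_symm h)⟩
      loopless := ⟨fun a h => h.1 rfl⟩ } with hG
  have hadj : ∀ a b : Fin n, G.Adj a b ↔ a ≠ b ∧ (β a = β b ∨ Nrel (β a) (β b)) :=
    fun _ _ => Iff.rfl
  -- three-vertex lemma: vertices in the same blob have the same neighbours outside
  have key : ∀ a b c : Fin n, β a = β b → c ≠ a → G.Adj c b → ¬ G.Adj c a → False := by
    rintro a b c hβ hca ⟨_, hcb2⟩ hcna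
    exact hcna ⟨hca, by rw [hβ]; exact hcb2⟩
  -- P5-freeness
  have hP5 : IndFree (pathGraph 5) G := by
    rintro s ⟨φ⟩
    set u : Fin 5 → Fin n := fun i => (φ i : Fin n) with hu
    have huinj : Function.Injective u := fun i j h => φ.injective (Subtype.ext h)
    have hadju : ∀ i j : Fin 5, G.Adj (u i) (u j) ↔ (pathGraph 5).Adj i j := by
      intro i j
      exact φ.map_rel_iff
    -- blob map injective
    have hwitness : ∀ i j : Fin 5, (pathGraph 5).Adj i j →
        ∃ w : Fin 5, w ≠ i ∧ w ≠ j ∧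
          (((pathGraph 5).Adj w j ∧ ¬ (pathGraph 5).Adj w i) ∨
           ((pathGraph 5).Adj w i ∧ ¬ (pathGraph 5).Adj w j)) := by
      simp only [pathGraph_adj]
      decide
    have hβinj : Function.Injective (fun i => β (u i)) := by
      intro i j hij
      by_contra hne
      have hPadj : (pathGraph 5).Adj i j := by
        rw [← hadju]
        exact ⟨fun h => hne (huinj h), Or.inl hij⟩
      obtain ⟨w, hwi, hwj, hcase⟩ := hwitness i j hPadj
      rcases hcase with ⟨h1, h2⟩ | ⟨h1, h2⟩
      · exact key (u i) (u j) (u w) hij (fun h => hwi (huinj h))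
          ((hadju _ _).mpr h1) (fun h => h2 ((hadju _ _).mp h))
      · exact key (u j) (u i) (u w) hij.symm (fun h => hwj (huinj h))
          ((hadju _ _).mpr h1) (fun h => h2 ((hadju _ _).mp h))
    have hbij : Function.Bijective (fun i => β (u i)) :=
      (Finite.injective_iff_bijective).mp hβinj
    set c := β (u 0) with hc
    obtain ⟨j1, hj1'⟩ := hbij.2 (c + 1)
    obtain ⟨j2, hj2'⟩ := hbij.2 (c + 4)
    have hj1 : β (u j1) = c + 1 := hj1'
    have hj2 : β (u j2) = c + 4 := hj2'
    have hj10 : j1 ≠ 0 := by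
      intro h; subst h
      have h5 : ∀ d : Fin 5, d + 1 ≠ d := by decide
      rw [← hc] at hj1; exact h5 c hj1.symm
    have hj20 : j2 ≠ 0 := by
      intro h; subst h
      have h5 : ∀ d : Fin 5, d + 4 ≠ d := by decide
      rw [← hc] at hj2; exact h5 c hj2.symm
    have hNc : ∀ d : Fin 5, Nrel d (d + 1) ∧ Nrel d (d + 4) ∧ d + 1 ≠ d + 4 := by decide
    have hA1 : G.Adj (u 0) (u j1) :=
      ⟨fun h => hj10 (huinj h).symm, Or.inr (by rw [hj1, ← hc]; exact (hNc c).1)⟩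
    have hA2 : G.Adj (u 0) (u j2) :=
      ⟨fun h => hj20 (huinj h).symm, Or.inr (by rw [hj2, ← hc]; exact (hNc c).2.1)⟩
    have hone : ∀ j : Fin 5, (pathGraph 5).Adj 0 j → j = 1 := by
      simp only [pathGraph_adj]; decide
    have e1 : j1 = 1 := hone j1 ((hadju _ _).mp hA1)
    have e2 : j2 = 1 := hone j2 ((hadju _ _).mp hA2)
    apply (hNc c).2.2
    rw [← hj1, ← hj2, e1, e2]
  -- C4-freeness
  have hC4 : IndFree (cycleGraph 4) G := by
    rintro s ⟨φ⟩
    set u : Fin 4 → Fin n := fun i => (φ i : Fin n) with hu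
    have huinj : Function.Injective u := fun i j h => φ.injective (Subtype.ext h)
    have hadju : ∀ i j : Fin 4, G.Adj (u i) (u j) ↔ (cycleGraph 4).Adj i j := by
      intro i j
      exact φ.map_rel_iff
    have hwitness : ∀ i j : Fin 4, (cycleGraph 4).Adj i j →
        ∃ w : Fin 4, w ≠ i ∧ w ≠ j ∧
          (((cycleGraph 4).Adj w j ∧ ¬ (cycleGraph 4).Adj w i) ∨
           ((cycleGraph 4).Adj w i ∧ ¬ (cycleGraph 4).Adj w j)) := by
      simp only [show (4 : ℕ) = 2 + 2 from rfl, cycleGraph_adj]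
      decide
    have hβinj : Function.Injective (fun i => β (u i)) := by
      intro i j hij
      by_contra hne
      have hPadj : (cycleGraph 4).Adj i j := by
        rw [← hadju]
        exact ⟨fun h => hne (huinj h), Or.inl hij⟩
      obtain ⟨w, hwi, hwj, hcase⟩ := hwitness i j hPadj
      rcases hcase with ⟨h1, h2⟩ | ⟨h1, h2⟩
      · exact key (u i) (u j) (u w) hij (fun h => hwi (huinj h))
          ((hadju _ _).mpr h1) (fun h => h2 ((hadju _ _).mp h))
      · exact key (u j) (u i) (u w) hij.symm (fun h => hwj (huinj h))
          ((hadju _ _).mpr h1) (fun h => h2 ((hadju _ _).mp h))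
    -- transfer relations
    have hNOf : ∀ i j : Fin 4, (cycleGraph 4).Adj i j → Nrel (β (u i)) (β (u j)) := by
      intro i j h
      have h2 := (hadju i j).mpr h
      rcases h2.2 with h3 | h3
      · exact absurd (hβinj h3) h.ne
      · exact h3
    have hNOfn : ∀ i j : Fin 4, i ≠ j → ¬ (cycleGraph 4).Adj i j → ¬ Nrel (β (u i)) (β (u j)) := by
      intro i j hij h hN
      exact h ((hadju i j).mp ⟨fun hh => hij (huinj hh), Or.inr hN⟩)
    have hc5 : ∀ a b c d : Fin 5, a ≠ c → b ≠ d →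
        Nrel a b → Nrel b c → Nrel c d → Nrel d a → Nrel a c ∨ Nrel b d := by decide
    have hcadj : (cycleGraph 4).Adj 0 1 ∧ (cycleGraph 4).Adj 1 2 ∧ (cycleGraph 4).Adj 2 3 ∧
        (cycleGraph 4).Adj 3 0 ∧ ¬ (cycleGraph 4).Adj 0 2 ∧ ¬ (cycleGraph 4).Adj 1 3 := by
      simp only [show (4 : ℕ) = 2 + 2 from rfl, cycleGraph_adj]
      decide
    obtain ⟨c01, c12, c23, c30, c02, c13⟩ := hcadj
    have h02 : β (u 0) ≠ β (u 2) := fun h => (by decide : (0 : Fin 4) ≠ 2) (hβinj h)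
    have h13 : β (u 1) ≠ β (u 3) := fun h => (by decide : (1 : Fin 4) ≠ 3) (hβinj h)
    rcases hc5 _ _ _ _ h02 h13 (hNOf 0 1 c01) (hNOf 1 2 c12) (hNOf 2 3 c23) (hNOf 3 0 c30) with
      h | h
    · exact hNOfn 0 2 (by decide) c02 h
    · exact hNOfn 1 3 (by decide) c13 h
  -- fiber cardinalities
  have hfiber_le : ∀ (t : Finset (Fin n)) (j : Fin 5),
      (t.filter (fun a => β a = j)).card ≤ q j := by
    intro t j
    have : (t.filter (fun a => β a = j)).card ≤ (Finset.range (q j)).card := by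
      apply Finset.card_le_card_of_injOn μ
      · intro a ha
        simp only [Finset.mem_coe, Finset.mem_filter] at ha
        simp only [Finset.mem_coe, Finset.mem_range, ← ha.2]
        exact hμ a
      · intro a ha b hb hab
        simp only [Finset.coe_filter, Set.mem_setOf_eq] at ha hb
        exact hinj a b (ha.2.trans hb.2.symm) hab
    simpa using this
  have hfiber_eq : ∀ j : Fin 5, (Finset.univ.filter (fun a => β a = j)).card = q j := by
    intro j
    refine le_antisymm (hfiber_le _ j) ?_
    rcases Nat.eq_zero_or_pos (q j) with h0 | hpos
    · simp [h0]
    obtain ⟨a0, ha0, _⟩ := hsurj j 0 hpos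
    have : (Finset.range (q j)).card ≤ (Finset.univ.filter (fun a => β a = j)).card := by
      apply Finset.card_le_card_of_injOn
        (fun t => if h : t < q j then Classical.choose (hsurj j t h) else a0)
      · intro t ht
        simp only [Finset.mem_coe, Finset.mem_range] at ht
        simp only [dif_pos ht, Finset.mem_coe, Finset.mem_filter, Finset.mem_univ, true_and]
        exact (Classical.choose_spec (hsurj j t ht)).1
      · intro t1 h1 t2 h2 heq
        simp only [Finset.coe_range, Set.mem_Iio] at h1 h2
        simp only [dif_pos h1, dif_pos h2] at heq
        have s1 := Classical.choose_spec (hsurj j t1 h1)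
        have s2 := Classical.choose_spec (hsurj j t2 h2)
        rw [← s1.2, ← s2.2, heq]
    simpa using this
  -- clique upper bound
  have hclique_le : ∀ t : Finset (Fin n), G.IsClique t → t.card ≤ ωv := by
    intro t ht
    have hq_le : ∀ j : Fin 5, q j ≤ ωv := by
      intro j
      have := hqω j (j + 1) (by revert j; decide)
      omega
    by_cases hemp : t = ∅
    · subst hemp; simp
    obtain ⟨a0, ha0⟩ := Finset.nonempty_iff_ne_empty.mpr hemp
    by_cases hsame : ∀ a ∈ t, β a = β a0
    · calc t.card = (t.filter (fun a => β a = β a0)).card := by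
            congr 1; symm; apply Finset.filter_true_of_mem hsame
        _ ≤ q (β a0) := hfiber_le t (β a0)
        _ ≤ ωv := hq_le _
    · push_neg at hsame
      obtain ⟨a1, ha1, ha1ne⟩ := hsame
      have hN01 : Nrel (β a0) (β a1) := by
        have := ht ha0 ha1 (fun h => ha1ne (by rw [h]))
        rcases this.2 with h | h
        · exact absurd h.symm ha1ne
        · exact h
      have hcover : ∀ a ∈ t, β a = β a0 ∨ β a = β a1 := by
        intro a ha
        by_contra hcon
        push_neg at hcon
        have hNa0 : Nrel (β a) (β a0) := by
          have := ht ha ha0 (fun h => hcon.1 (by rw [h]))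
          rcases this.2 with h | h
          · exact absurd h hcon.1
          · exact h
        have hNa1 : Nrel (β a) (β a1) := by
          have := ht ha ha1 (fun h => hcon.2 (by rw [h]))
          rcases this.2 with h | h
          · exact absurd h hcon.2
          · exact h
        have htri : ∀ x y w : Fin 5, x ≠ y → w ≠ x → w ≠ y →
            Nrel x y → Nrel w x → Nrel w y → False := by decide
        exact htri (β a0) (β a1) (β a) ha1ne.symm hcon.1 hcon.2 hN01 hNa0 hNa1
      have hsplit : t.card = (t.filter (fun a => β a = β a0)).card +
          (t.filter (fun a => ¬ β a = β a0)).card :=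
        (Finset.card_filter_add_card_filter_not _).symm
      have hsub : t.filter (fun a => ¬ β a = β a0) ⊆ t.filter (fun a => β a = β a1) := by
        intro a ha
        simp only [Finset.mem_filter] at ha ⊢
        exact ⟨ha.1, (hcover a ha.1).resolve_left ha.2⟩
      have := hqω (β a0) (β a1) hN01
      have h1 := hfiber_le t (β a0)
      have h2 := Finset.card_le_card hsub
      have h3 := hfiber_le t (β a1)
      omega
  -- clique witness
  obtain ⟨i0, hi0⟩ := hwit
  have hne01 : i0 ≠ i0 + 1 := by
    have : ∀ d : Fin 5, d ≠ d + 1 := by decide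
    exact this i0
  have hN01' : Nrel i0 (i0 + 1) := by
    have : ∀ d : Fin 5, Nrel d (d + 1) := by decide
    exact this i0
  set tw : Finset (Fin n) := Finset.univ.filter (fun a => β a = i0 ∨ β a = i0 + 1) with htw
  have htwclique : G.IsClique tw := by
    intro a ha b hb hab
    simp only [htw, Finset.coe_filter, Set.mem_setOf_eq] at ha hb
    refine ⟨hab, ?_⟩
    rcases ha.2 with h1 | h1 <;> rcases hb.2 with h2 | h2
    · exact Or.inl (h1.trans h2.symm)
    · exact Or.inr (by rw [h1, h2]; exact hN01')
    · exact Or.inr (by rw [h1, h2]; exact Nrel_symm hN01')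
    · exact Or.inl (h1.trans h2.symm)
  have htwcard : tw.card = ωv := by
    have hdisj : tw = (Finset.univ.filter (fun a => β a = i0)) ∪
        (Finset.univ.filter (fun a => β a = i0 + 1)) := by
      rw [← Finset.filter_or]
    rw [hdisj, Finset.card_union_of_disjoint, hfiber_eq, hfiber_eq, hi0]
    · rw [Finset.disjoint_filter]
      intro a _ h1 h2
      exact hne01 (h1.symm.trans h2)
  have hcliqueNum : G.cliqueNum = ωv := by
    refine le_antisymm ?_ ?_
    · obtain ⟨t, htc⟩ := G.exists_isNClique_cliqueNum
      have h1 := hclique_le t htc.isClique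
      have h2 := htc.card_eq
      omega
    · have h := IsClique.card_le_cliqueNum (G := G) (t := tw) (tc := htwclique)
      rwa [htwcard] at h
  -- colour offsets
  set o : Fin 5 → ℕ := fun j => ∑ i ∈ Finset.univ.filter (fun i : Fin 5 => i.val < j.val), y i
    with ho
  have homono : ∀ i j : Fin 5, i.val < j.val → o i + y i ≤ o j := by
    intro i j hij
    have hnot : i ∉ Finset.univ.filter (fun x : Fin 5 => x.val < i.val) := by simp
    have hsub : insert i (Finset.univ.filter (fun x : Fin 5 => x.val < i.val)) ⊆
        Finset.univ.filter (fun x : Fin 5 => x.val < j.val) := by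
      intro x hx
      simp only [Finset.mem_insert, Finset.mem_filter, Finset.mem_univ, true_and] at hx ⊢
      rcases hx with rfl | hx
      · exact hij
      · omega
    calc o i + y i
        = ∑ x ∈ insert i (Finset.univ.filter (fun x : Fin 5 => x.val < i.val)), y x := by
          rw [Finset.sum_insert hnot, ho]; ring
      _ ≤ o j := Finset.sum_le_sum_of_subset hsub
  have hototal : ∀ i : Fin 5, o i + y i ≤ ∑ x, y x := by
    intro i
    have hnot : i ∉ Finset.univ.filter (fun x : Fin 5 => x.val < i.val) := by simp
    calc o i + y i
        = ∑ x ∈ insert i (Finset.univ.filter (fun x : Fin 5 => x.val < i.val)), y x := by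
          rw [Finset.sum_insert hnot, ho]; ring
      _ ≤ ∑ x, y x := Finset.sum_le_sum_of_subset (Finset.subset_univ _)
  have hcolinj : ∀ (i i' : Fin 5) (t t' : ℕ), t < y i → t' < y i' → o i + t = o i' + t' →
      i = i' ∧ t = t' := by
    intro i i' t t' ht ht' heq
    rcases lt_trichotomy i.val i'.val with h | h | h
    · have := homono i i' h; omega
    · have : i = i' := Fin.ext h
      subst this; omega
    · have := homono i' i h; omega
  -- the colouring
  set col : Fin n → ℕ := fun a =>
    if z = 1 ∧ β a = 0 ∧ μ a = q 0 - 1 then ∑ x, y x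
    else if μ a < y (β a) then o (β a) + μ a
    else o (β a + 3) + (μ a - y (β a)) with hcol
  have hclass : ∀ a : Fin n, (z = 1 ∧ β a = 0 ∧ μ a = q 0 - 1 ∧ col a = ∑ x, y x) ∨
      (∃ (i : Fin 5) (t : ℕ), ((i = β a ∧ t = μ a) ∨ (i = β a + 3 ∧ t + y (β a) = μ a)) ∧
        t < y i ∧ col a = o i + t) := by
    intro a
    by_cases h1 : z = 1 ∧ β a = 0 ∧ μ a = q 0 - 1
    · exact Or.inl ⟨h1.1, h1.2.1, h1.2.2, by rw [hcol]; simp only [if_pos h1]⟩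
    · right
      by_cases h2 : μ a < y (β a)
      · exact ⟨β a, μ a, Or.inl ⟨rfl, rfl⟩, h2, by rw [hcol]; simp only [if_neg h1, if_pos h2]⟩
      · push_neg at h2
        refine ⟨β a + 3, μ a - y (β a), Or.inr ⟨rfl, by omega⟩, ?_,
          by rw [hcol]; simp only [if_neg h1]; rw [if_neg (by omega)]⟩
        have hμa := hμ a
        by_cases h3 : β a = 0
        · rw [h3] at hμa h2 ⊢
          have hqa0 : q 0 = y 0 + y (0 + 3) + z := by simpa using hq 0
          rcases Nat.lt_or_ge z 1 with hz0 | hz1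
          · omega
          · have hz1' : z = 1 := by omega
            have hne : μ a ≠ q 0 - 1 := fun hh => h1 ⟨hz1', h3, hh⟩
            omega
        · have hqa0 := hq (β a)
          rw [if_neg h3] at hqa0
          omega
  have hltk : ∀ a : Fin n, col a < k := by
    intro a
    rcases hclass a with ⟨hza, _, _, hca⟩ | ⟨i, t, _, ht, hca⟩
    · omega
    · have := hototal i; omega
  have hd3 : ∀ d : Fin 5, d ≠ d + 3 := by decide
  have hdisj5 : ∀ d e : Fin 5, Nrel d e → d ≠ e ∧ d ≠ e + 3 ∧ d + 3 ≠ e ∧ d + 3 ≠ e + 3 := by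
    decide
  have hvalid : ∀ a b : Fin n, G.Adj a b → col a ≠ col b := by
    rintro a b ⟨hab, hblob⟩ hceq
    rcases hclass a with ⟨hza, ha0, haμ, hca⟩ | ⟨i, t, hit, ht, hca⟩ <;>
      rcases hclass b with ⟨hzb, hb0, hbμ, hcb⟩ | ⟨i', t', hit', ht', hcb⟩
    · exact hab (hinj a b (ha0.trans hb0.symm) (haμ.trans hbμ.symm))
    · have := hototal i'; omega
    · have := hototal i; omega
    · obtain ⟨hii', htt'⟩ := hcolinj i i' t t' ht ht' (by omega)
      subst htt'
      rcases hblob with hbb | hbb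
      · rcases hit with ⟨rfl, htv⟩ | ⟨rfl, htv⟩ <;> rcases hit' with ⟨hiv, htv'⟩ | ⟨hiv, htv'⟩
        · exact hab (hinj a b hbb (by omega))
        · have h' := hii'.trans hiv
          rw [← hbb] at h'
          exact hd3 (β a) h'
        · have h' := hii'.trans hiv
          rw [← hbb] at h'
          exact hd3 (β a) h'.symm
        · rw [hbb] at htv
          exact hab (hinj a b hbb (by omega))
      · have h4 := hdisj5 (β a) (β b) hbb
        rcases hit with ⟨rfl, _⟩ | ⟨rfl, _⟩ <;> rcases hit' with ⟨hiv, _⟩ | ⟨hiv, _⟩ <;>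
          have h' := hii'.trans hiv
        · exact h4.1 h'
        · exact h4.2.1 h'
        · exact h4.2.2.1 h'
        · exact h4.2.2.2 h'
  -- chromatic number
  have hcolorable : G.Colorable k :=
    ⟨SimpleGraph.Coloring.mk (fun a => (⟨col a, hltk a⟩ : Fin k))
      (fun {a b} h => fun hh => hvalid a b h (by simpa [Fin.ext_iff] using hh))⟩
  have hlow : ∀ m : ℕ, G.Colorable m → k ≤ m := by
    intro m ⟨C⟩
    have hfib : ∀ c : Fin m, (Finset.univ.filter (fun a : Fin n => C a = c)).card ≤ 2 := by
      intro c
      by_contra hcon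
      push_neg at hcon
      obtain ⟨a, ha, b, hb, d, hd, hab, had, hbd⟩ := Finset.two_lt_card.mp hcon
      simp only [Finset.mem_filter, Finset.mem_univ, true_and] at ha hb hd
      have hnadj : ∀ x w : Fin n, C x = c → C w = c → ¬ G.Adj x w := by
        intro x w hx hw hadjxw
        exact C.valid hadjxw (hx.trans hw.symm)
      have f1 : ¬ (β a = β b ∨ Nrel (β a) (β b)) := fun h => hnadj a b ha hb ⟨hab, h⟩
      have f2 : ¬ (β a = β d ∨ Nrel (β a) (β d)) := fun h => hnadj a d ha hd ⟨had, h⟩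
      have f3 : ¬ (β b = β d ∨ Nrel (β b) (β d)) := fun h => hnadj b d hb hd ⟨hbd, h⟩
      push_neg at f1 f2 f3
      have hind : ∀ x y w : Fin 5, x ≠ y → x ≠ w → y ≠ w →
          ¬ Nrel x y → ¬ Nrel x w → ¬ Nrel y w → False := by decide
      exact hind (β a) (β b) (β d) f1.1 f2.1 f3.1 f1.2 f2.2 f3.2
    have hcard : n ≤ 2 * m := by
      have h1 : (Finset.univ : Finset (Fin n)).card ≤
          2 * ((Finset.univ : Finset (Fin n)).image C).card :=
        Finset.card_le_mul_card_image (f := fun a => C a) Finset.univ 2 (fun c _ => hfib c)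
      have h2 : ((Finset.univ : Finset (Fin n)).image C).card ≤ m := by
        calc ((Finset.univ : Finset (Fin n)).image C).card
            ≤ (Finset.univ : Finset (Fin m)).card := Finset.card_le_card (Finset.subset_univ _)
          _ = m := by simp
      simpa using h1.trans (by omega)
    omega
  have hchrom : G.chromaticNumber = (k : ℕ∞) := by
    refine le_antisymm hcolorable.chromaticNumber_le ?_
    rw [SimpleGraph.chromaticNumber]
    apply le_iInf₂
    intro m hm
    exact_mod_cast Nat.cast_le.mpr (hlow m hm)
  exact ⟨G, hP5, hC4, hcliqueNum, hchrom⟩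

lemma exists_blob (q : Fin 5 → ℕ) :
    ∃ (β : Fin (∑ j, q j) → Fin 5) (μ : Fin (∑ j, q j) → ℕ),
      (∀ a b, β a = β b → μ a = μ b → a = b) ∧
      (∀ a, μ a < q (β a)) ∧
      (∀ j : Fin 5, ∀ t : ℕ, t < q j → ∃ a, β a = j ∧ μ a = t) := by
  have hcard : Fintype.card (Σ j : Fin 5, Fin (q j)) = ∑ j, q j := by
    simp [Fintype.card_sigma]
  let e : (Σ j : Fin 5, Fin (q j)) ≃ Fin (∑ j, q j) := Fintype.equivFinOfCardEq hcard
  refine ⟨fun a => (e.symm a).1, fun a => ((e.symm a).2 : ℕ), ?_, ?_, ?_⟩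
  · intro a b h1 h2
    apply e.symm.injective
    have h1' : (e.symm a).fst = (e.symm b).fst := h1
    have h2' : ((e.symm a).snd : ℕ) = ((e.symm b).snd : ℕ) := h2
    exact Sigma.ext h1' ((Fin.heq_ext_iff (by rw [h1'])).mpr h2')
  · intro a; exact (e.symm a).2.isLt
  · intro j t ht
    refine ⟨e ⟨j, ⟨t, ht⟩⟩, ?_, ?_⟩
    · show (e.symm (e ⟨j, ⟨t, ht⟩⟩)).fst = j
      rw [e.symm_apply_apply]
    · show ((e.symm (e ⟨j, ⟨t, ht⟩⟩)).snd : ℕ) = t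
      rw [e.symm_apply_apply]

lemma build (ωv k z : ℕ) (q y : Fin 5 → ℕ)
    (hz : z ≤ 1)
    (hq : ∀ j : Fin 5, q j = y j + y (j + 3) + (if j = 0 then z else 0))
    (hqω : ∀ i j : Fin 5, Nrel i j → q i + q j ≤ ωv)
    (hwit : ∃ i : Fin 5, q i + q (i + 1) = ωv)
    (hk : k = (∑ i, y i) + z) :
    ∃ (n : ℕ) (G : SimpleGraph (Fin n)), IndFree (pathGraph 5) G ∧ IndFree (cycleGraph 4) G ∧
      G.cliqueNum = ωv ∧ G.chromaticNumber = (k : ℕ∞) := by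
  obtain ⟨β, μ, h1, h2, h3⟩ := exists_blob q
  have hsum : ∑ j, q j = 2 * (∑ i, y i) + z := by
    have e1 : ∑ j : Fin 5, y (j + 3) = ∑ j : Fin 5, y j :=
      Fintype.sum_equiv (Equiv.addRight 3) _ _ (fun j => rfl)
    have e2 : ∑ j : Fin 5, (if j = 0 then z else 0) = z := by simp
    calc ∑ j, q j = ∑ j : Fin 5, (y j + y (j + 3) + (if j = 0 then z else 0)) := by
          exact Finset.sum_congr rfl (fun j _ => hq j)
      _ = (∑ j : Fin 5, y j) + (∑ j : Fin 5, y (j + 3)) +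
            ∑ j : Fin 5, (if j = 0 then z else 0) := by
          rw [← Finset.sum_add_distrib, ← Finset.sum_add_distrib]
      _ = 2 * (∑ i, y i) + z := by rw [e1, e2]; ring
  have hn : 2 * k ≤ (∑ j, q j) + 1 := by omega
  obtain ⟨G, hh1, hh2, hh3, hh4⟩ :=
    master (∑ j, q j) k ωv z q y β μ h1 h2 h3 hz hq hqω hwit hk hn
  exact ⟨_, G, hh1, hh2, hh3, hh4⟩


/-- For every positive integer `ω` there is a finite `(P₅, C₄)`-free graph `G` with
`ω(G) = ω` and `χ(G) = ⌈(5ω − 1)/4⌉`. -/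
theorem stmt4 (ω : ℕ) (hω : 0 < ω) :
    ∃ (n : ℕ) (G : SimpleGraph (Fin n)), IndFree (pathGraph 5) G ∧
      IndFree (cycleGraph 4) G ∧ G.cliqueNum = ω ∧
      G.chromaticNumber = (((5 * ω - 1 + 3) / 4 : ℕ) : ℕ∞) := by

  set s := ω / 4 with hs
  have hr : ω % 4 = 0 ∨ ω % 4 = 1 ∨ ω % 4 = 2 ∨ ω % 4 = 3 := by omega
  have hso : ω = 4 * s + ω % 4 := by omega
  rcases hr with h | h | h | h
  · -- ω = 4s
    have hk : (5 * ω - 1 + 3) / 4 = 5 * s := by omega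
    rw [hk]
    exact build ω (5 * s) 0 ![2*s, 2*s, 2*s, 2*s, 2*s] ![s, s, s, s, s]
      (by omega)
      (by intro j; fin_cases j <;> simp <;> omega)
      (by intro i j hN; fin_cases i <;> fin_cases j <;> simp [Nrel] at hN ⊢ <;> omega)
      (⟨0, by simp; omega⟩)
      (by simp [Fin.sum_univ_five] <;> omega)
  · have hk : (5 * ω - 1 + 3) / 4 = 5 * s + 1 := by omega
    rw [hk]
    exact build ω (5 * s + 1) 0 ![2*s+1, 2*s, 2*s+1, 2*s, 2*s] ![s+1, s, s, s, s]
      (by omega)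
      (by intro j; fin_cases j <;> simp <;> omega)
      (by intro i j hN; fin_cases i <;> fin_cases j <;> simp [Nrel] at hN ⊢ <;> omega)
      (⟨0, by simp; omega⟩)
      (by simp [Fin.sum_univ_five] <;> omega)
  · have hk : (5 * ω - 1 + 3) / 4 = 5 * s + 3 := by omega
    rw [hk]
    exact build ω (5 * s + 3) 1 ![2*s+1, 2*s+1, 2*s+1, 2*s+1, 2*s+1] ![s, s+1, s+1, s, s]
      (by omega)
      (by intro j; fin_cases j <;> simp <;> omega)
      (by intro i j hN; fin_cases i <;> fin_cases j <;> simp [Nrel] at hN ⊢ <;> omega)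
      (⟨0, by simp; omega⟩)
      (by simp [Fin.sum_univ_five] <;> omega)
  · have hk : (5 * ω - 1 + 3) / 4 = 5 * s + 4 := by omega
    rw [hk]
    exact build ω (5 * s + 4) 1 ![2*s+2, 2*s+1, 2*s+1, 2*s+2, 2*s+1] ![s, s+1, s+1, s+1, s]
      (by omega)
      (by intro j; fin_cases j <;> simp <;> omega)
      (by intro i j hN; fin_cases i <;> fin_cases j <;> simp [Nrel] at hN ⊢ <;> omega)
      (⟨0, by simp; omega⟩)
      (by simp [Fin.sum_univ_five] <;> omega)
end

section
/- Every finite critical (P5, co-banner)-free graph is 2K2-free. -/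
open SimpleGraph

namespace Stmt6Aux


variable {V : Type} {G : SimpleGraph V}

lemma embed_config {k : ℕ} (H : SimpleGraph (Fin k)) (f : Fin k → V)
    (hinj : Function.Injective f) (hiff : ∀ i j, H.Adj i j ↔ G.Adj (f i) (f j))
    (hfree : IndFree H G) : False := by
  apply hfree (Set.range f)
  refine ⟨⟨Equiv.ofInjective f hinj, ?_⟩⟩
  intro i j
  simp only [Equiv.ofInjective_apply, comap_adj, Function.Embedding.coe_subtype]
  exact (hiff i j).symm

/-- P5 configuration: a-b-c-d-e induced path gives a contradiction with P5-freeness. -/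
lemma p5_config (hP5 : IndFree (pathGraph 5) G) (a b c d e : V)
    (hab : G.Adj a b) (hbc : G.Adj b c) (hcd : G.Adj c d) (hde : G.Adj d e)
    (hac : ¬ G.Adj a c) (had : ¬ G.Adj a d) (hae : ¬ G.Adj a e)
    (hbd : ¬ G.Adj b d) (hbe : ¬ G.Adj b e) (hce : ¬ G.Adj c e)
    (hab' : a ≠ b) (hac' : a ≠ c) (had' : a ≠ d) (hae' : a ≠ e)
    (hbc' : b ≠ c) (hbd' : b ≠ d) (hbe' : b ≠ e)
    (hcd' : c ≠ d) (hce' : c ≠ e) (hde' : d ≠ e) : False := by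
  apply embed_config (pathGraph 5) ![a,b,c,d,e] ?_ ?_ hP5
  · intro i j hij
    fin_cases i <;> fin_cases j <;> simp_all <;> tauto
  · intro i j
    have hba := hab.symm; have hcb := hbc.symm; have hdc := hcd.symm; have hed := hde.symm
    have hca : ¬ G.Adj c a := fun h => hac h.symm
    have hda : ¬ G.Adj d a := fun h => had h.symm
    have hea : ¬ G.Adj e a := fun h => hae h.symm
    have hdb : ¬ G.Adj d b := fun h => hbd h.symm
    have heb : ¬ G.Adj e b := fun h => hbe h.symm
    have hec : ¬ G.Adj e c := fun h => hce h.symm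
    fin_cases i <;> fin_cases j <;>
      simp [pathGraph_adj, *] <;> omega

end Stmt6Aux

namespace Stmt6Aux

variable {V : Type} {G : SimpleGraph V}

/-- co-banner configuration: 2K2 on {x,y},{z,w} plus p adjacent to z,w,y but not x. -/
lemma cobanner_config (hcob : IndFree coBanner G) (x y z w p : V)
    (hxy : G.Adj x y) (hzw : G.Adj z w)
    (hpz : G.Adj p z) (hpw : G.Adj p w) (hpy : G.Adj p y)
    (hxz : ¬ G.Adj x z) (hxw : ¬ G.Adj x w) (hyz : ¬ G.Adj y z) (hyw : ¬ G.Adj y w)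
    (hxp : ¬ G.Adj x p)
    (hxy' : x ≠ y) (hxz' : x ≠ z) (hxw' : x ≠ w) (hxp' : x ≠ p)
    (hyz' : y ≠ z) (hyw' : y ≠ w) (hyp' : y ≠ p)
    (hzw' : z ≠ w) (hzp' : z ≠ p) (hwp' : w ≠ p) : False := by
  apply embed_config coBanner ![x, z, y, w, p] ?_ ?_ hcob
  · intro i j hij
    fin_cases i <;> fin_cases j <;> simp_all
  · intro i j
    have hyx := hxy.symm; have hwz := hzw.symm
    have hzp := hpz.symm; have hwp := hpw.symm; have hyp := hpy.symm
    have hzx : ¬ G.Adj z x := fun h => hxz h.symm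
    have hwx : ¬ G.Adj w x := fun h => hxw h.symm
    have hzy : ¬ G.Adj z y := fun h => hyz h.symm
    have hwy : ¬ G.Adj w y := fun h => hyw h.symm
    have hpx : ¬ G.Adj p x := fun h => hxp h.symm
    have hxx : ¬ G.Adj x x := G.loopless.irrefl x
    have hyy : ¬ G.Adj y y := G.loopless.irrefl y
    have hzz : ¬ G.Adj z z := G.loopless.irrefl z
    have hww : ¬ G.Adj w w := G.loopless.irrefl w
    have hpp : ¬ G.Adj p p := G.loopless.irrefl p
    fin_cases i <;> fin_cases j <;>
      simp [coBanner, banner, fromEdgeSet_adj, *]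



variable {V : Type} {G : SimpleGraph V}

/-- Build colorability of an induced subgraph from a ℕ-valued function. -/
lemma induce_colorable_of_fun {S : Set V} {n : ℕ} (f : V → ℕ)
    (hlt : ∀ v ∈ S, f v < n)
    (hproper : ∀ u ∈ S, ∀ v ∈ S, G.Adj u v → f u ≠ f v) :
    (G.induce S).Colorable n := by
  rw [colorable_iff_exists_bdd_nat_coloring]
  refine ⟨Coloring.mk (fun v => f v.1) ?_, fun v => hlt v.1 v.2⟩
  rintro ⟨a, ha⟩ ⟨b, hb⟩ hab
  exact hproper a ha b hb hab

/-- Extract a ℕ-valued function from colorability of an induced subgraph. -/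
lemma fun_of_induce_colorable {S : Set V} {n : ℕ}
    (h : (G.induce S).Colorable n) :
    ∃ f : V → ℕ, (∀ v ∈ S, f v < n) ∧
      ∀ u ∈ S, ∀ v ∈ S, G.Adj u v → f u ≠ f v := by
  rw [colorable_iff_exists_bdd_nat_coloring] at h
  obtain ⟨C, hC⟩ := h
  classical
  refine ⟨fun v => if hv : v ∈ S then C ⟨v, hv⟩ else 0, fun v hv => by simpa [hv] using hC ⟨v, hv⟩, ?_⟩
  intro u hu v hv hadj
  simpa [hu, hv] using C.valid (by exact hadj : (G.induce S).Adj ⟨u, hu⟩ ⟨v, hv⟩)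

lemma induce_colorable_mono {S S' : Set V} {n : ℕ} (hss : S ⊆ S')
    (h : (G.induce S').Colorable n) : (G.induce S).Colorable n :=
  Colorable.of_hom (G.induceHomOfLE hss).toHom h

lemma colorable_of_fun {n : ℕ} (f : V → ℕ) (hlt : ∀ v, f v < n)
    (hproper : ∀ u v, G.Adj u v → f u ≠ f v) : G.Colorable n := by
  rw [colorable_iff_exists_bdd_nat_coloring]
  exact ⟨Coloring.mk f (fun hab => hproper _ _ hab), hlt⟩

lemma crit_extract [Fintype V] (hcrit : IsCritical G) (v : V) :
    ∃ n : ℕ, (↑n < G.chromaticNumber) ∧ (G.induce {u | u ≠ v}).Colorable n := by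
  have h := hcrit.2 v
  have htop : (G.induce {u | u ≠ v}).chromaticNumber ≠ ⊤ := by
    intro hh
    rw [hh] at h
    exact (not_top_lt h)
  obtain ⟨n, hn⟩ := WithTop.ne_top_iff_exists.mp htop
  refine ⟨n, ?_, ?_⟩
  · exact_mod_cast lt_of_eq_of_lt hn h
  · rw [← chromaticNumber_le_iff_colorable]
    exact_mod_cast le_of_eq hn.symm

lemma no_comparable [Fintype V] (hcrit : IsCritical G) (u v : V) (hne : u ≠ v)
    (hnadj : ¬ G.Adj u v) (hsub : ∀ x, G.Adj u x → G.Adj v x) : False := by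
  classical
  obtain ⟨n, hlt, hcol⟩ := crit_extract hcrit u
  obtain ⟨f, hflt, hfp⟩ := fun_of_induce_colorable hcol
  have hvne : v ≠ u := fun h => hne h.symm
  have hcoln : G.Colorable n := by
    apply colorable_of_fun (fun x => if x = u then f v else f x)
    · intro x
      by_cases hx : x = u
      · simpa [hx] using hflt v hvne
      · simpa [hx] using hflt x hx
    · intro x y hadj
      by_cases hx : x = u
      · have hy : y ≠ u := by
          intro h
          exact G.loopless.irrefl y (by rw [hx, h] at hadj; rw [h]; exact hadj)
        have hvy : G.Adj v y := hsub y (hx ▸ hadj)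
        simpa [hx, hy] using hfp v hvne y hy hvy
      · by_cases hy : y = u
        · have hvx : G.Adj v x := hsub x (hy ▸ hadj).symm
          simpa [hx, hy] using fun h => (hfp x hx v hvne hvx.symm) h
        · simpa [hx, hy] using hfp x hx y hy hadj
  rw [← chromaticNumber_le_iff_colorable] at hcoln
  exact absurd (lt_of_lt_of_le hlt hcoln) (lt_irrefl _)



variable {W : Type} {Γ : SimpleGraph W}

lemma exists_walk_to_getVert {u v : W} (p : Γ.Walk u v) (i : ℕ) :
    ∃ q : Γ.Walk u (p.getVert i), q.length ≤ i := by
  induction p generalizing i with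
  | nil => exact ⟨(Walk.nil).copy rfl (by cases i <;> rfl), by simp⟩
  | @cons a b c h q ih =>
    cases i with
    | zero => exact ⟨(Walk.nil).copy rfl (Walk.getVert_zero _).symm, by simp⟩
    | succ n =>
      obtain ⟨r, hr⟩ := ih n
      exact ⟨(r.cons h).copy rfl (by rw [Walk.getVert_cons_succ]), by simp; omega⟩

lemma exists_walk_from_getVert {u v : W} (p : Γ.Walk u v) {i : ℕ} (hi : i ≤ p.length) :
    ∃ q : Γ.Walk (p.getVert i) v, q.length ≤ p.length - i := by
  obtain ⟨r, hr⟩ := exists_walk_to_getVert p.reverse (p.length - i)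
  have hgv : p.reverse.getVert (p.length - i) = p.getVert i := by
    rw [Walk.getVert_reverse]
    congr 1
    omega
  exact ⟨(r.copy rfl hgv).reverse, by simpa using hr⟩

lemma dist_getVert_left {u v : W} (p : Γ.Walk u v) (i : ℕ) :
    Γ.dist u (p.getVert i) ≤ i := by
  obtain ⟨q, hq⟩ := exists_walk_to_getVert p i
  exact le_trans (dist_le q) hq

lemma dist_getVert_right {u v : W} (p : Γ.Walk u v) {i : ℕ} (hi : i ≤ p.length) :
    Γ.dist (p.getVert i) v ≤ p.length - i := by
  obtain ⟨q, hq⟩ := exists_walk_from_getVert p hi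
  exact le_trans (dist_le q) hq

/-- On a geodesic walk, two vertices at positions `i < j` with `j ≥ i+2` are nonadjacent,
and positions `i < j` carry distinct vertices. -/
lemma geodesic_not_adj {u v : W} (p : Γ.Walk u v) (hp : p.length = Γ.dist u v)
    {i j : ℕ} (hij : i + 2 ≤ j) (hj : j ≤ p.length) :
    ¬ Γ.Adj (p.getVert i) (p.getVert j) := by
  intro hadj
  obtain ⟨q1, hq1⟩ := exists_walk_to_getVert p i
  obtain ⟨q2, hq2⟩ := exists_walk_from_getVert p hj
  have := Γ.dist_le (q1.append (Walk.cons hadj q2))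
  rw [Walk.length_append, Walk.length_cons] at this
  omega

lemma geodesic_ne {u v : W} (p : Γ.Walk u v) (hp : p.length = Γ.dist u v)
    {i j : ℕ} (hij : i < j) (hj : j ≤ p.length) :
    p.getVert i ≠ p.getVert j := by
  intro heq
  obtain ⟨q1, hq1⟩ := exists_walk_to_getVert p i
  obtain ⟨q2, hq2⟩ := exists_walk_from_getVert p hj
  have := Γ.dist_le (q1.append (q2.copy heq.symm rfl))
  rw [Walk.length_append, Walk.length_copy] at this
  omega

/-- An injection of one finset of naturals into another of larger cardinality. -/
lemma exists_injOn_finset (A B : Finset ℕ) (h : A.card ≤ B.card) :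
    ∃ φ : ℕ → ℕ, Set.InjOn φ ↑A ∧ ∀ x ∈ A, φ x ∈ B := by
  classical
  have eA := A.orderIsoOfFin rfl
  have eB := B.orderIsoOfFin rfl
  refine ⟨fun x => if hx : x ∈ A then (eB (Fin.castLE h (eA.symm ⟨x, hx⟩))).1 else 0, ?_, ?_⟩
  · intro x hx y hy hxy
    simp only [Finset.mem_coe] at hx hy
    dsimp only at hxy
    rw [dif_pos hx, dif_pos hy] at hxy
    have : eB (Fin.castLE h (eA.symm ⟨x, hx⟩)) = eB (Fin.castLE h (eA.symm ⟨y, hy⟩)) :=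
      Subtype.ext hxy
    have := eB.injective this
    have := Fin.castLE_injective h this
    have := eA.symm.injective this
    exact congrArg Subtype.val this
  · intro x hx
    dsimp only
    rw [dif_pos hx]
    exact (eB _).2


/-- The gluing lemma: a critical graph has no separation `P | S | Q` where `Q` is complete
to `S` and `S` is partitioned by `κ` into modules that are pairwise complete. -/
lemma glue [Fintype V] (hcrit : IsCritical G) (P Q S : Set V)
    (hPS : ∀ v, v ∈ P → v ∉ S) (hQS : ∀ v, v ∈ Q → v ∉ S) (hPQ : ∀ v, v ∈ P → v ∉ Q)
    (hcover : ∀ v, v ∈ P ∨ v ∈ Q ∨ v ∈ S)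
    (hPQn : ∀ p ∈ P, ∀ q ∈ Q, ¬ G.Adj p q)
    (hQSa : ∀ q ∈ Q, ∀ s ∈ S, G.Adj q s)
    {ι : Type} (κ : V → ι)
    (hmod : ∀ t ∈ S, ∀ t' ∈ S, κ t = κ t' → ∀ v, v ∉ S → G.Adj v t → G.Adj v t')
    (hcomp : ∀ t ∈ S, ∀ t' ∈ S, κ t ≠ κ t' → G.Adj t t')
    (a0 : V) (ha0 : a0 ∈ P) (c0 : V) (hc0 : c0 ∈ Q) : False := by
  classical
  obtain ⟨n1, hn1, hcol1⟩ := crit_extract hcrit c0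
  obtain ⟨n2, hn2, hcol2⟩ := crit_extract hcrit a0
  set n := max n1 n2 with hn
  have hcol1' : (G.induce (P ∪ S)).Colorable n := by
    refine induce_colorable_mono ?_ (hcol1.mono (le_max_left n1 n2))
    intro v hv
    rcases hv with hv | hv
    · exact fun h => hPQ v hv (h ▸ hc0)
    · exact fun h => hQS c0 hc0 (h ▸ hv)
  have hcol2' : (G.induce (Q ∪ S)).Colorable n := by
    refine induce_colorable_mono ?_ (hcol2.mono (le_max_right n1 n2))
    intro v hv
    rcases hv with hv | hv
    · exact fun h => hPQ a0 ha0 (h ▸ hv)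
    · exact fun h => hPS a0 ha0 (h ▸ hv)
  obtain ⟨f1, hf1lt, hf1p⟩ := fun_of_induce_colorable hcol1'
  obtain ⟨f2, hf2lt, hf2p⟩ := fun_of_induce_colorable hcol2'
  -- class finsets
  set Sfin : Finset V := Finset.univ.filter (· ∈ S) with hSfin
  have hmemS : ∀ v, v ∈ Sfin ↔ v ∈ S := by
    intro v; simp [hSfin]
  set X : ι → Finset V := fun i => Sfin.filter (fun s => κ s = i) with hX
  have hmemX : ∀ i v, v ∈ X i ↔ (v ∈ S ∧ κ v = i) := by
    intro i v; simp [hX, hmemS v]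
  set F1 : ι → Finset ℕ := fun i => (X i).image f1 with hF1
  set F2 : ι → Finset ℕ := fun i => (X i).image f2 with hF2
  -- disjointness of F1 across classes
  have hF1disj : ∀ i j, i ≠ j → ∀ x, x ∈ F1 i → x ∈ F1 j → False := by
    intro i j hij x hxi hxj
    obtain ⟨u, hu, hux⟩ := Finset.mem_image.mp hxi
    obtain ⟨w, hw, hwx⟩ := Finset.mem_image.mp hxj
    rw [hmemX] at hu hw
    have hadj : G.Adj u w := hcomp u hu.1 w hw.1 (by rw [hu.2, hw.2]; exact hij)
    exact hf1p u (Or.inr hu.1) w (Or.inr hw.1) hadj (by rw [hux, hwx])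
  have hF2disj : ∀ i j, i ≠ j → ∀ x, x ∈ F2 i → x ∈ F2 j → False := by
    intro i j hij x hxi hxj
    obtain ⟨u, hu, hux⟩ := Finset.mem_image.mp hxi
    obtain ⟨w, hw, hwx⟩ := Finset.mem_image.mp hxj
    rw [hmemX] at hu hw
    have hadj : G.Adj u w := hcomp u hu.1 w hw.1 (by rw [hu.2, hw.2]; exact hij)
    exact hf2p u (Or.inr hu.1) w (Or.inr hw.1) hadj (by rw [hux, hwx])
  -- per-class injections
  have hpick : ∀ i : ι, ∃ φ : ℕ → ℕ, (F2 i).card ≤ (F1 i).card →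
      (Set.InjOn φ ↑(F2 i) ∧ ∀ x ∈ F2 i, φ x ∈ F1 i) := by
    intro i
    by_cases h : (F2 i).card ≤ (F1 i).card
    · obtain ⟨φ, hφ⟩ := exists_injOn_finset (F2 i) (F1 i) h
      exact ⟨φ, fun _ => hφ⟩
    · exact ⟨id, fun hh => absurd hh h⟩
  choose φ hφ using hpick
  -- the compressed coloring on S
  set g : V → ℕ := fun t => if (F2 (κ t)).card ≤ (F1 (κ t)).card then φ (κ t) (f2 t) else f1 t
    with hg
  have hmemgF1 : ∀ t ∈ S, g t ∈ F1 (κ t) := by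
    intro t ht
    have htX : t ∈ X (κ t) := (hmemX _ t).mpr ⟨ht, rfl⟩
    by_cases h : (F2 (κ t)).card ≤ (F1 (κ t)).card
    · rw [hg]; dsimp only; rw [if_pos h]
      exact (hφ (κ t) h).2 _ (Finset.mem_image_of_mem f2 htX)
    · rw [hg]; dsimp only; rw [if_neg h]
      exact Finset.mem_image_of_mem f1 htX
  have hglt : ∀ t ∈ S, g t < n := by
    intro t ht
    obtain ⟨u, hu, hux⟩ := Finset.mem_image.mp (hmemgF1 t ht)
    rw [hmemX] at hu
    exact hux ▸ hf1lt u (Or.inr hu.1)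
  -- properness of g on S
  have hgp : ∀ t ∈ S, ∀ t' ∈ S, G.Adj t t' → g t ≠ g t' := by
    intro t ht t' ht' hadj
    by_cases hk : κ t = κ t'
    · rw [hg]; dsimp only; rw [hk]
      have htX : t ∈ X (κ t') := (hmemX _ t).mpr ⟨ht, hk⟩
      have ht'X : t' ∈ X (κ t') := (hmemX _ t').mpr ⟨ht', rfl⟩
      have hne2 : f2 t ≠ f2 t' := hf2p t (Or.inr ht) t' (Or.inr ht') hadj
      by_cases h : (F2 (κ t')).card ≤ (F1 (κ t')).card
      · rw [if_pos h, if_pos h]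
        exact fun hh => hne2 ((hφ (κ t') h).1
          (Finset.mem_coe.mpr (Finset.mem_image_of_mem f2 htX))
          (Finset.mem_coe.mpr (Finset.mem_image_of_mem f2 ht'X)) hh)
      · rw [if_neg h, if_neg h]
        exact hf1p t (Or.inr ht) t' (Or.inr ht') hadj
    · intro hh
      exact hF1disj (κ t) (κ t') hk (g t) (hmemgF1 t ht) (hh ▸ hmemgF1 t' ht')
  -- properness of g against P (via the module property)
  have hgP : ∀ t ∈ S, ∀ v, v ∉ S → G.Adj v t → (v ∈ P ∪ S) → f1 v ≠ g t := by
    intro t ht v hv hadj hvPS heq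
    obtain ⟨u, hu, hux⟩ := Finset.mem_image.mp (hmemgF1 t ht)
    rw [hmemX] at hu
    have hadj' : G.Adj v u := hmod t ht u hu.1 hu.2.symm v hv hadj
    exact hf1p v hvPS u (Or.inr hu.1) hadj' (by rw [heq, hux])
  -- cardinality comparison
  set Sg : Finset ℕ := Sfin.image g with hSg
  set Sf2 : Finset ℕ := Sfin.image f2 with hSf2
  set C : Finset ι := Sfin.image κ with hC
  have hbiUg : Sg = C.biUnion (fun i => (X i).image g) := by
    apply Finset.ext
    intro x
    simp only [hSg, hC, Finset.mem_biUnion, Finset.mem_image]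
    constructor
    · rintro ⟨t, ht, rfl⟩
      exact ⟨κ t, ⟨t, ht, rfl⟩, ⟨t, (hmemX _ t).mpr ⟨(hmemS t).mp ht, rfl⟩, rfl⟩⟩
    · rintro ⟨i, _, t, htX, rfl⟩
      exact ⟨t, (hmemS t).mpr ((hmemX i t).mp htX).1, rfl⟩
  have hbiUf2 : Sf2 = C.biUnion (fun i => F2 i) := by
    apply Finset.ext
    intro x
    simp only [hSf2, hC, hF2, Finset.mem_biUnion, Finset.mem_image]
    constructor
    · rintro ⟨t, ht, rfl⟩
      exact ⟨κ t, ⟨t, ht, rfl⟩, ⟨t, (hmemX _ t).mpr ⟨(hmemS t).mp ht, rfl⟩, rfl⟩⟩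
    · rintro ⟨i, _, t, htX, rfl⟩
      exact ⟨t, (hmemS t).mpr ((hmemX i t).mp htX).1, rfl⟩
  have hgX : ∀ i, ∀ x ∈ (X i).image g, x ∈ F1 i := by
    intro i x hx
    obtain ⟨t, htX, rfl⟩ := Finset.mem_image.mp hx
    obtain ⟨ht, hkt⟩ := (hmemX i t).mp htX
    exact hkt ▸ hmemgF1 t ht
  have hcard : Sg.card ≤ Sf2.card := by
    rw [hbiUg, hbiUf2]
    rw [Finset.card_biUnion, Finset.card_biUnion]
    · apply Finset.sum_le_sum
      intro i _
      by_cases h : (F2 i).card ≤ (F1 i).card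
      · -- g = φ i ∘ f2 on X i
        have himg : (X i).image g ⊆ (F2 i).image (φ i) := by
          intro x hx
          obtain ⟨t, htX, rfl⟩ := Finset.mem_image.mp hx
          obtain ⟨ht, hkt⟩ := (hmemX i t).mp htX
          have : g t = φ i (f2 t) := by
            rw [hg]; dsimp only; rw [hkt, if_pos h]
          rw [this]
          exact Finset.mem_image_of_mem _ (Finset.mem_image_of_mem f2 htX)
        calc ((X i).image g).card ≤ ((F2 i).image (φ i)).card := Finset.card_le_card himg
          _ ≤ (F2 i).card := Finset.card_image_le
      · push_neg at h
        have himg : (X i).image g = F1 i := by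
          rw [hF1]
          apply Finset.image_congr
          intro t htX
          obtain ⟨ht, hkt⟩ := (hmemX i t).mp (Finset.mem_coe.mp htX)
          rw [hg]; dsimp only; rw [hkt, if_neg (not_le.mpr h)]
        rw [himg]
        omega
    · intro i _ j _ hij
      simp only [Finset.disjoint_left]
      intro x hxi hxj
      exact hF2disj i j hij x hxi hxj
    · intro i _ j _ hij
      simp only [Finset.disjoint_left]
      intro x hxi hxj
      exact hF1disj i j hij x (hgX i x hxi) (hgX j x hxj)
  -- σ
  have hSgR : Sg ⊆ Finset.range n := by
    intro x hx
    obtain ⟨t, ht, rfl⟩ := Finset.mem_image.mp hx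
    exact Finset.mem_range.mpr (hglt t ((hmemS t).mp ht))
  have hSf2R : Sf2 ⊆ Finset.range n := by
    intro x hx
    obtain ⟨t, ht, rfl⟩ := Finset.mem_image.mp hx
    exact Finset.mem_range.mpr (hf2lt t (Or.inr ((hmemS t).mp ht)))
  obtain ⟨σ, hσinj, hσmem⟩ := exists_injOn_finset (Finset.range n \ Sf2) (Finset.range n \ Sg)
    (by rw [Finset.card_sdiff_of_subset hSf2R, Finset.card_sdiff_of_subset hSgR]; omega)
  -- final coloring
  set F : V → ℕ := fun v => if v ∈ Q then σ (f2 v) else if v ∈ S then g v else f1 v with hF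
  have hf2Q : ∀ q ∈ Q, f2 q ∈ Finset.range n \ Sf2 := by
    intro q hq
    rw [Finset.mem_sdiff]
    refine ⟨Finset.mem_range.mpr (hf2lt q (Or.inl hq)), ?_⟩
    intro hmem
    obtain ⟨s, hs, hsq⟩ := Finset.mem_image.mp hmem
    exact hf2p q (Or.inl hq) s (Or.inr ((hmemS s).mp hs)) (hQSa q hq s ((hmemS s).mp hs)) hsq.symm
  have hFQ : ∀ q ∈ Q, F q ∈ Finset.range n \ Sg := by
    intro q hq
    rw [hF]; dsimp only; rw [if_pos hq]
    exact hσmem _ (hf2Q q hq)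
  have hcoln : G.Colorable n := by
    apply colorable_of_fun F
    · intro v
      by_cases hvQ : v ∈ Q
      · exact Finset.mem_range.mp (Finset.mem_sdiff.mp (hFQ v hvQ)).1
      · by_cases hvS : v ∈ S
        · rw [hF]; dsimp only; rw [if_neg hvQ, if_pos hvS]
          exact hglt v hvS
        · rw [hF]; dsimp only; rw [if_neg hvQ, if_neg hvS]
          have hvP : v ∈ P := by
            rcases hcover v with h | h | h
            · exact h
            · exact absurd h hvQ
            · exact absurd h hvS
          exact hf1lt v (Or.inl hvP)
    · intro x y hadj
      have hxy := G.ne_of_adj hadj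
      by_cases hxQ : x ∈ Q <;> by_cases hyQ : y ∈ Q
      · -- both in Q
        rw [hF]; dsimp only; rw [if_pos hxQ, if_pos hyQ]
        have := hf2p x (Or.inl hxQ) y (Or.inl hyQ) hadj
        exact fun hh => this (hσinj (Finset.mem_coe.mpr (hf2Q x hxQ))
          (Finset.mem_coe.mpr (hf2Q y hyQ)) hh)
      · -- x ∈ Q, y ∉ Q
        by_cases hyS : y ∈ S
        · have h1 := hFQ x hxQ
          rw [hF]; dsimp only; rw [if_pos hxQ, if_neg hyQ, if_pos hyS]
          intro hh
          have : g y ∈ Sg := Finset.mem_image_of_mem g ((hmemS y).mpr hyS)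
          rw [← hh] at this
          rw [hF] at h1; dsimp only at h1; rw [if_pos hxQ] at h1
          exact (Finset.mem_sdiff.mp h1).2 this
        · have hyP : y ∈ P := by
            rcases hcover y with h | h | h
            · exact h
            · exact absurd h hyQ
            · exact absurd h hyS
          exact absurd hadj.symm (hPQn y hyP x hxQ)
      · -- y ∈ Q, x ∉ Q
        by_cases hxS : x ∈ S
        · have h1 := hFQ y hyQ
          rw [hF]; dsimp only; rw [if_neg hxQ, if_pos hxS, if_pos hyQ]
          intro hh
          have : g x ∈ Sg := Finset.mem_image_of_mem g ((hmemS x).mpr hxS)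
          rw [hh] at this
          rw [hF] at h1; dsimp only at h1; rw [if_pos hyQ] at h1
          exact (Finset.mem_sdiff.mp h1).2 this
        · have hxP : x ∈ P := by
            rcases hcover x with h | h | h
            · exact h
            · exact absurd h hxQ
            · exact absurd h hxS
          exact absurd hadj (hPQn x hxP y hyQ)
      · -- neither in Q
        by_cases hxS : x ∈ S <;> by_cases hyS : y ∈ S
        · rw [hF]; dsimp only; rw [if_neg hxQ, if_pos hxS, if_neg hyQ, if_pos hyS]
          exact hgp x hxS y hyS hadj
        · have hyP : y ∈ P := by
            rcases hcover y with h | h | h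
            · exact h
            · exact absurd h hyQ
            · exact absurd h hyS
          rw [hF]; dsimp only; rw [if_neg hxQ, if_pos hxS, if_neg hyQ, if_neg hyS]
          exact fun hh => hgP x hxS y hyS hadj.symm (Or.inl hyP) hh.symm
        · have hxP : x ∈ P := by
            rcases hcover x with h | h | h
            · exact h
            · exact absurd h hxQ
            · exact absurd h hxS
          rw [hF]; dsimp only; rw [if_neg hxQ, if_neg hxS, if_neg hyQ, if_pos hyS]
          exact hgP y hyS x hxS hadj (Or.inl hxP)
        · have hxP : x ∈ P := by
            rcases hcover x with h | h | h
            · exact h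
            · exact absurd h hxQ
            · exact absurd h hxS
          have hyP : y ∈ P := by
            rcases hcover y with h | h | h
            · exact h
            · exact absurd h hyQ
            · exact absurd h hyS
          rw [hF]; dsimp only; rw [if_neg hxQ, if_neg hxS, if_neg hyQ, if_neg hyS]
          exact hf1p x (Or.inl hxP) y (Or.inl hyP) hadj
  -- contradiction
  have hle := hcoln.chromaticNumber_le
  have hlt : (↑n : ℕ∞) < G.chromaticNumber := by
    rw [hn]
    exact_mod_cast max_lt hn1 hn2
  exact absurd (lt_of_le_of_lt hle hlt) (lt_irrefl _)



variable {V : Type} {G : SimpleGraph V}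

lemma extract_2K2 (h : ¬ IndFree twoK2 G) :
    ∃ a b c d : V, G.Adj a b ∧ G.Adj c d ∧ ¬ G.Adj a c ∧ ¬ G.Adj a d ∧
      ¬ G.Adj b c ∧ ¬ G.Adj b d ∧ a ≠ c ∧ a ≠ d ∧ b ≠ c ∧ b ≠ d := by
  rw [IndFree] at h
  push_neg at h
  obtain ⟨s, ⟨e⟩⟩ := h
  have hadj : ∀ i j : Fin 4, twoK2.Adj i j ↔ G.Adj (e i).1 (e j).1 := by
    intro i j
    rw [← e.map_rel_iff]
    rfl
  have hne : ∀ i j : Fin 4, i ≠ j → (e i).1 ≠ (e j).1 := by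
    intro i j hij h
    exact hij (e.toEquiv.injective (Subtype.ext h))
  refine ⟨(e 0).1, (e 1).1, (e 2).1, (e 3).1, ?_, ?_, ?_, ?_, ?_, ?_,
    hne 0 2 (by decide), hne 0 3 (by decide), hne 1 2 (by decide), hne 1 3 (by decide)⟩
  · exact (hadj 0 1).mp (by simp [twoK2, fromEdgeSet_adj])
  · exact (hadj 2 3).mp (by simp [twoK2, fromEdgeSet_adj])
  · exact fun h => (by simpa [twoK2, fromEdgeSet_adj] using (hadj 0 2).mpr h : _)
  · exact fun h => (by simpa [twoK2, fromEdgeSet_adj] using (hadj 0 3).mpr h : _)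
  · exact fun h => (by simpa [twoK2, fromEdgeSet_adj] using (hadj 1 2).mpr h : _)
  · exact fun h => (by simpa [twoK2, fromEdgeSet_adj] using (hadj 1 3).mpr h : _)


lemma L1 (hP5 : IndFree (pathGraph 5) G) (hcob : IndFree coBanner G) (a b c d v : V)
    (hab : G.Adj a b) (hcd : G.Adj c d) (hac : ¬ G.Adj a c) (had : ¬ G.Adj a d)
    (hbc : ¬ G.Adj b c) (hbd : ¬ G.Adj b d)
    (hva : G.Adj v a) (hvc : G.Adj v c) (hvb' : v ≠ b) (hvd' : v ≠ d) :
    G.Adj v b ∧ G.Adj v d := by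
  have hac' : a ≠ c := fun h => hbc (h ▸ hab).symm
  have had' : a ≠ d := fun h => hac (h ▸ hcd).symm
  have hbc' : b ≠ c := fun h => hac (h ▸ hab)
  have hbd' : b ≠ d := fun h => hbc (h ▸ hcd).symm
  have hva' : v ≠ a := G.ne_of_adj hva
  have hvc' : v ≠ c := G.ne_of_adj hvc
  by_cases hvb : G.Adj v b <;> by_cases hvd : G.Adj v d
  · exact ⟨hvb, hvd⟩
  · -- v ~ a,b,c but not d : co-banner (d,c,a,b,v)
    exact absurd (cobanner_config hcob d c a b v hcd.symm hab hva hvb hvc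
      (fun h => had h.symm) (fun h => hbd h.symm) (fun h => hac h.symm) (fun h => hbc h.symm)
      (fun h => hvd h.symm)
      (G.ne_of_adj hcd).symm (Ne.symm had') (Ne.symm hbd') (Ne.symm hvd')
      (Ne.symm hac') (Ne.symm hbc') (Ne.symm hvc') (G.ne_of_adj hab) hva'.symm hvb'.symm) id
  · -- v ~ a,c,d but not b : co-banner (b,a,c,d,v)
    exact absurd (cobanner_config hcob b a c d v hab.symm hcd hvc hvd hva
      (fun h => hbc h) (fun h => hbd h) hac had (fun h => hvb h.symm)
      (G.ne_of_adj hab).symm hbc' hbd' (Ne.symm hvb') hac' had' (Ne.symm hva')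
      (G.ne_of_adj hcd) hvc'.symm hvd'.symm) id
  · -- neither: P5 b-a-v-c-d
    exact absurd (p5_config hP5 b a v c d hab.symm hva.symm hvc hcd
      (fun h => hvb h.symm) hbc hbd hac had (fun h => hvd h)
      (G.ne_of_adj hab).symm (Ne.symm hvb') hbc' hbd' (Ne.symm hva') hac' had'
      hvc' hvd' (G.ne_of_adj hcd)) id

lemma main [Fintype V] (hcrit : IsCritical G) (hP5 : IndFree (pathGraph 5) G)
    (hcob : IndFree coBanner G) (A B C D : V)
    (hab : G.Adj A B) (hcd : G.Adj C D) (hac : ¬ G.Adj A C) (had : ¬ G.Adj A D)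
    (hbc : ¬ G.Adj B C) (hbd : ¬ G.Adj B D)
    (hac' : A ≠ C) (had' : A ≠ D) (hbc' : B ≠ C) (hbd' : B ≠ D) : False := by
  classical
  set T : Set V := {v | G.Adj v A ∧ G.Adj v B ∧ G.Adj v C ∧ G.Adj v D} with hT
  set Tc : Set V := {v | v ∉ T} with hTc
  set H : SimpleGraph ↥Tc := G.induce Tc with hH
  have hHadj : ∀ x y : ↥Tc, H.Adj x y ↔ G.Adj x.1 y.1 := fun x y => Iff.rfl
  have hATc : A ∈ Tc := fun h => G.loopless.irrefl A h.1
  have hBTc : B ∈ Tc := fun h => hbc h.2.2.1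
  have hCTc : C ∈ Tc := fun h => G.loopless.irrefl C h.2.2.1
  have hDTc : D ∈ Tc := fun h => had h.1.symm
  -- (F1) A and C are not reachable in G - T
  have hF1 : ¬ H.Reachable ⟨A, hATc⟩ ⟨C, hCTc⟩ := by
    intro hreach
    obtain ⟨p, hp⟩ := hreach.exists_walk_length_eq_dist
    set L := H.dist ⟨A, hATc⟩ ⟨C, hCTc⟩ with hL
    have hpL : p.length = L := hp
    have hL0 : L ≠ 0 := by
      intro h
      have h0 := (hreach.dist_eq_zero_iff).mp (hL.symm.trans h)
      exact hac' (congrArg Subtype.val h0)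
    have hL1 : L ≠ 1 := by
      intro h
      exact hac ((hHadj _ _).mp (dist_eq_one_iff_adj.mp (hL ▸ h)))
    have hgeoadj : ∀ i, i < L → G.Adj (p.getVert i).1 (p.getVert (i+1)).1 :=
      fun i hi => (hHadj _ _).mp (p.adj_getVert_succ (by omega))
    have hgeonadj : ∀ i j, i + 2 ≤ j → j ≤ L → ¬ G.Adj (p.getVert i).1 (p.getVert j).1 :=
      fun i j hij hj hadj => geodesic_not_adj p (hpL.trans hL) hij (by omega)
        ((hHadj _ _).mpr hadj)
    have hgeone : ∀ i j, i < j → j ≤ L → (p.getVert i).1 ≠ (p.getVert j).1 :=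
      fun i j hij hj heq => geodesic_ne p (hpL.trans hL) hij (by omega) (Subtype.ext heq)
    have hv0 : (p.getVert 0).1 = A := congrArg Subtype.val p.getVert_zero
    have hvL : (p.getVert L).1 = C := by
      rw [← hpL]; exact congrArg Subtype.val p.getVert_length
    by_cases h2 : L = 2
    · set z := p.getVert 1 with hz
      have hzA : G.Adj A z.1 := hv0 ▸ hgeoadj 0 (by omega)
      have hv2 : (p.getVert 2).1 = C := by rw [← h2]; exact hvL
      have hzC : G.Adj z.1 C := by
        have := hgeoadj 1 (by omega)
        rwa [hv2] at this
      have hzB : z.1 ≠ B := fun h => hbc (h ▸ hzC)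
      have hzD : z.1 ≠ D := fun h => had (h ▸ hzA)
      obtain ⟨hzB', hzD'⟩ := L1 hP5 hcob A B C D z.1 hab hcd hac had hbc hbd
        hzA.symm hzC hzB hzD
      exact z.2 ⟨hzA.symm, hzB', hzC, hzD'⟩
    · by_cases h3 : L = 3
      · set z1 := p.getVert 1 with hz1
        set z2 := p.getVert 2 with hz2
        have hz1A : G.Adj A z1.1 := hv0 ▸ hgeoadj 0 (by omega)
        have hz12 : G.Adj z1.1 z2.1 := hgeoadj 1 (by omega)
        have hv3 : (p.getVert 3).1 = C := by rw [← h3]; exact hvL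
        have hz2C : G.Adj z2.1 C := by
          have := hgeoadj 2 (by omega)
          rwa [hv3] at this
        have hz1C : ¬ G.Adj z1.1 C := by
          have := hgeonadj 1 3 (by omega) (by omega)
          rwa [hv3] at this
        have hz2A : ¬ G.Adj A z2.1 := by
          have := hgeonadj 0 2 (by omega) (by omega)
          rwa [hv0] at this
        have hz1ne2 : z1.1 ≠ z2.1 := G.ne_of_adj hz12
        have hz1neC : z1.1 ≠ C := by
          have := hgeone 1 3 (by omega) (by omega)
          rwa [hv3] at this
        have hz2neA : A ≠ z2.1 := by
          have := hgeone 0 2 (by omega) (by omega)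
          rwa [hv0] at this
        have hz1neA : A ≠ z1.1 := G.ne_of_adj hz1A
        have hz2neC : z2.1 ≠ C := G.ne_of_adj hz2C
        have hz1neD : z1.1 ≠ D := fun h => had (h ▸ hz1A)
        -- z1 is not adjacent to D
        have hz1D : ¬ G.Adj z1.1 D := by
          intro hz1D
          have hz1B : z1.1 ≠ B := fun h => hbd (h ▸ hz1D)
          obtain ⟨hB', hC'⟩ := L1 hP5 hcob A B D C z1.1 hab hcd.symm had hac hbd hbc
            hz1A.symm hz1D hz1B hz1neC
          exact z1.2 ⟨hz1A.symm, hB', hC', hz1D⟩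
        by_cases hz2D : G.Adj z2.1 D
        · -- co-banner (A, z1, C, D, z2)
          exact cobanner_config hcob A z1.1 C D z2.1 hz1A hcd hz2C hz2D hz12.symm
            hac had (fun h => hz1C h) (fun h => hz1D h) hz2A
            hz1neA hac' had' hz2neA hz1neC hz1neD hz1ne2
            (G.ne_of_adj hcd) (Ne.symm hz2neC) (fun h => (G.ne_of_adj hz2D) h.symm)
        · -- P5 (A, z1, z2, C, D)
          have hz2neD : z2.1 ≠ D := fun h => hz1D (h ▸ hz12)
          exact p5_config hP5 A z1.1 z2.1 C D hz1A hz12 hz2C hcd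
            hz2A hac had hz1C hz1D hz2D
            hz1neA hz2neA hac' had' hz1ne2 hz1neC hz1neD hz2neC
            hz2neD (G.ne_of_adj hcd)
      · -- L ≥ 4 : induced P5 on the first five vertices
        have h4 : 4 ≤ L := by omega
        exact p5_config hP5 (p.getVert 0).1 (p.getVert 1).1 (p.getVert 2).1
          (p.getVert 3).1 (p.getVert 4).1
          (hgeoadj 0 (by omega)) (hgeoadj 1 (by omega)) (hgeoadj 2 (by omega))
          (hgeoadj 3 (by omega))
          (hgeonadj 0 2 (by omega) (by omega)) (hgeonadj 0 3 (by omega) (by omega))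
          (hgeonadj 0 4 (by omega) (by omega)) (hgeonadj 1 3 (by omega) (by omega))
          (hgeonadj 1 4 (by omega) (by omega)) (hgeonadj 2 4 (by omega) (by omega))
          (hgeone 0 1 (by omega) (by omega)) (hgeone 0 2 (by omega) (by omega))
          (hgeone 0 3 (by omega) (by omega)) (hgeone 0 4 (by omega) (by omega))
          (hgeone 1 2 (by omega) (by omega)) (hgeone 1 3 (by omega) (by omega))
          (hgeone 1 4 (by omega) (by omega)) (hgeone 2 3 (by omega) (by omega))
          (hgeone 2 4 (by omega) (by omega)) (hgeone 3 4 (by omega) (by omega))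
    -- basic reachability tools
  have hFadj : ∀ (u : ↥Tc) (w : V) (hw : w ∈ Tc), G.Adj u.1 w → H.Reachable u ⟨w, hw⟩ :=
    fun u w hw h => ((hHadj u ⟨w, hw⟩).mpr h).reachable
  have hDC : H.Reachable ⟨D, hDTc⟩ ⟨C, hCTc⟩ := hFadj ⟨D, hDTc⟩ C hCTc hcd.symm
  have hBA : H.Reachable ⟨B, hBTc⟩ ⟨A, hATc⟩ := hFadj ⟨B, hBTc⟩ A hATc hab.symm
  have hreachA : ∀ u : ↥Tc, H.Reachable u ⟨A, hATc⟩ →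
      ¬ G.Adj u.1 C ∧ ¬ G.Adj u.1 D ∧ u.1 ≠ C ∧ u.1 ≠ D := by
    intro u hu
    refine ⟨?_, ?_, ?_, ?_⟩
    · intro h
      exact hF1 (hu.symm.trans (hFadj u C hCTc h))
    · intro h
      exact hF1 (hu.symm.trans ((hFadj u D hDTc h).trans hDC))
    · intro h
      have : u = ⟨C, hCTc⟩ := Subtype.ext h
      rw [this] at hu
      exact hF1 hu.symm
    · intro h
      have : u = ⟨D, hDTc⟩ := Subtype.ext h
      rw [this] at hu
      exact hF1 (hu.symm.trans hDC)
  have hreachC : ∀ u : ↥Tc, H.Reachable u ⟨C, hCTc⟩ →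
      ¬ G.Adj u.1 A ∧ ¬ G.Adj u.1 B ∧ u.1 ≠ A ∧ u.1 ≠ B := by
    intro u hu
    refine ⟨?_, ?_, ?_, ?_⟩
    · intro h
      exact hF1 ((hFadj u A hATc h).symm.trans hu)
    · intro h
      exact hF1 (((hFadj u B hBTc h).trans hBA).symm.trans hu)
    · intro h
      have : u = ⟨A, hATc⟩ := Subtype.ext h
      rw [this] at hu
      exact hF1 hu
    · intro h
      have : u = ⟨B, hBTc⟩ := Subtype.ext h
      rw [this] at hu
      exact hF1 (hBA.symm.trans hu)
  -- (F2) everything connected to A in G - T is complete to T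
  have key : ∀ (x y : ↥Tc) (w : H.Walk x y), y = (⟨A, hATc⟩ : ↥Tc) →
      ∀ t ∈ T, G.Adj t x.1 := by
    intro x y w
    induction w with
    | nil =>
      rintro rfl t ht
      exact ht.1
    | @cons u b y hadj q ih =>
      intro hy t ht
      obtain ⟨ht1, ht2, ht3, ht4⟩ := ht
      have hqA : H.Reachable b ⟨A, hATc⟩ := hy ▸ q.reachable
      have huA : H.Reachable u ⟨A, hATc⟩ := hadj.reachable.trans hqA
      have hib : G.Adj t b.1 := ih hy t ⟨ht1, ht2, ht3, ht4⟩
      by_contra hut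
      have h1 := hreachA u huA
      have h2 := hreachA b hqA
      exact cobanner_config hcob u.1 b.1 C D t ((hHadj u b).mp hadj) hcd ht3 ht4 hib
        h1.1 h1.2.1 h2.1 h2.2.1 (fun h => hut h.symm)
        (G.ne_of_adj ((hHadj u b).mp hadj)) h1.2.2.1 h1.2.2.2
        (fun h => u.2 (h.symm ▸ (⟨ht1, ht2, ht3, ht4⟩ : t ∈ T)))
        h2.2.2.1 h2.2.2.2
        (fun h => b.2 (h.symm ▸ (⟨ht1, ht2, ht3, ht4⟩ : t ∈ T)))
        (G.ne_of_adj hcd) (G.ne_of_adj ht3).symm (G.ne_of_adj ht4).symm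
  -- (F3) everything connected to C in G - T is complete to T
  have key2 : ∀ (x y : ↥Tc) (w : H.Walk x y), y = (⟨C, hCTc⟩ : ↥Tc) →
      ∀ t ∈ T, G.Adj t x.1 := by
    intro x y w
    induction w with
    | nil =>
      rintro rfl t ht
      exact ht.2.2.1
    | @cons u b y hadj q ih =>
      intro hy t ht
      obtain ⟨ht1, ht2, ht3, ht4⟩ := ht
      have hqC : H.Reachable b ⟨C, hCTc⟩ := hy ▸ q.reachable
      have huC : H.Reachable u ⟨C, hCTc⟩ := hadj.reachable.trans hqC
      have hib : G.Adj t b.1 := ih hy t ⟨ht1, ht2, ht3, ht4⟩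
      by_contra hut
      have h1 := hreachC u huC
      have h2 := hreachC b hqC
      exact cobanner_config hcob u.1 b.1 A B t ((hHadj u b).mp hadj) hab ht1 ht2 hib
        h1.1 h1.2.1 h2.1 h2.2.1 (fun h => hut h.symm)
        (G.ne_of_adj ((hHadj u b).mp hadj)) h1.2.2.1 h1.2.2.2
        (fun h => u.2 (h.symm ▸ (⟨ht1, ht2, ht3, ht4⟩ : t ∈ T)))
        h2.2.2.1 h2.2.2.2
        (fun h => b.2 (h.symm ▸ (⟨ht1, ht2, ht3, ht4⟩ : t ∈ T)))
        (G.ne_of_adj hab) (G.ne_of_adj ht1).symm (G.ne_of_adj ht2).symm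
  set Ra : Set V := {v | ∃ h : v ∈ Tc, H.Reachable ⟨v, h⟩ ⟨A, hATc⟩} with hRa
  set Rc : Set V := {v | ∃ h : v ∈ Tc, H.Reachable ⟨v, h⟩ ⟨C, hCTc⟩} with hRcdef
  set Far : Set V := {v | v ∈ Tc ∧ v ∉ Ra ∧ v ∉ Rc} with hFar
  have hRaT : ∀ v ∈ Ra, ∀ t ∈ T, G.Adj t v := by
    intro v hv t ht
    obtain ⟨h, hr⟩ := hv
    obtain ⟨w⟩ := hr
    exact key ⟨v, h⟩ _ w rfl t ht
  have hRcT : ∀ v ∈ Rc, ∀ t ∈ T, G.Adj t v := by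
    intro v hv t ht
    obtain ⟨h, hr⟩ := hv
    obtain ⟨w⟩ := hr
    exact key2 ⟨v, h⟩ _ w rfl t ht
  have hFarFacts : ∀ w ∈ Far, ¬G.Adj w A ∧ ¬G.Adj w B ∧ ¬G.Adj w C ∧ ¬G.Adj w D ∧
      w ≠ A ∧ w ≠ B ∧ w ≠ C ∧ w ≠ D := by
    intro w hw
    obtain ⟨hwTc, hwRa, hwRc⟩ := hw
    refine ⟨?_, ?_, ?_, ?_, ?_, ?_, ?_, ?_⟩
    · exact fun h => hwRa ⟨hwTc, hFadj ⟨w, hwTc⟩ A hATc h⟩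
    · exact fun h => hwRa ⟨hwTc, (hFadj ⟨w, hwTc⟩ B hBTc h).trans hBA⟩
    · exact fun h => hwRc ⟨hwTc, hFadj ⟨w, hwTc⟩ C hCTc h⟩
    · exact fun h => hwRc ⟨hwTc, (hFadj ⟨w, hwTc⟩ D hDTc h).trans hDC⟩
    · intro h
      refine hwRa ⟨hwTc, ?_⟩
      rw [show (⟨w, hwTc⟩ : ↥Tc) = ⟨A, hATc⟩ from Subtype.ext h]
    · intro h
      refine hwRa ⟨hwTc, ?_⟩
      rw [show (⟨w, hwTc⟩ : ↥Tc) = ⟨B, hBTc⟩ from Subtype.ext h]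
      exact hBA
    · intro h
      refine hwRc ⟨hwTc, ?_⟩
      rw [show (⟨w, hwTc⟩ : ↥Tc) = ⟨C, hCTc⟩ from Subtype.ext h]
    · intro h
      refine hwRc ⟨hwTc, ?_⟩
      rw [show (⟨w, hwTc⟩ : ↥Tc) = ⟨D, hDTc⟩ from Subtype.ext h]
      exact hDC
  -- all-or-none on far edges
  have hAON : ∀ t ∈ T, ∀ u w : V, u ∈ Far → w ∈ Far → G.Adj u w → G.Adj t u → G.Adj t w := by
    intro t ht u w hu hw huw htu
    obtain ⟨ht1, ht2, ht3, ht4⟩ := ht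
    by_contra htw
    have hUF := hFarFacts u hu
    have hWF := hFarFacts w hw
    exact cobanner_config hcob w u A B t huw.symm hab ht1 ht2 htu
      hWF.1 hWF.2.1 hUF.1 hUF.2.1 (fun h => htw h.symm)
      (G.ne_of_adj huw).symm hWF.2.2.2.2.1 hWF.2.2.2.2.2.1
      (fun h => hw.1 (h.symm ▸ (⟨ht1, ht2, ht3, ht4⟩ : t ∈ T)))
      hUF.2.2.2.2.1 hUF.2.2.2.2.2.1
      (fun h => hu.1 (h.symm ▸ (⟨ht1, ht2, ht3, ht4⟩ : t ∈ T)))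
      (G.ne_of_adj hab) (G.ne_of_adj ht1).symm (G.ne_of_adj ht2).symm
  -- far vertices have far neighbours
  have hFarNbr : ∀ f ∈ Far, ∃ g, g ∈ Far ∧ G.Adj f g := by
    intro f hf
    by_contra hng
    push_neg at hng
    have hsub : ∀ x, G.Adj f x → G.Adj A x := by
      intro x hx
      by_cases hxT : x ∈ T
      · exact hxT.1.symm
      · have hxRa : x ∉ Ra := by
          intro hmem
          obtain ⟨h, hr⟩ := hmem
          exact hf.2.1 ⟨hf.1, (hFadj ⟨f, hf.1⟩ x h hx).trans hr⟩
        have hxRc : x ∉ Rc := by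
          intro hmem
          obtain ⟨h, hr⟩ := hmem
          exact hf.2.2 ⟨hf.1, (hFadj ⟨f, hf.1⟩ x h hx).trans hr⟩
        exact absurd hx (hng x ⟨hxT, hxRa, hxRc⟩)
    exact no_comparable hcrit f A (hFarFacts f hf).2.2.2.2.1 (hFarFacts f hf).1 hsub
  -- pairwise completeness step
  have hstep : ∀ t ∈ T, ∀ t' ∈ T, ∀ f, f ∈ Far → G.Adj t f → ¬ G.Adj t' f →
      G.Adj t t' := by
    intro t ht t' ht' f hfF htf hnf'
    obtain ⟨g, hgF, hfg⟩ := hFarNbr f hfF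
    have htg : G.Adj t g := hAON t ht f g hfF hgF hfg htf
    have hnt'g : ¬ G.Adj t' g := fun h => hnf' (hAON t' ht' g f hgF hfF hfg.symm h)
    by_contra hntt'
    have hFf := hFarFacts f hfF
    have hFg := hFarFacts g hgF
    obtain ⟨ht1, ht2, ht3, ht4⟩ := ht
    obtain ⟨ht'1, ht'2, ht'3, ht'4⟩ := ht'
    exact cobanner_config hcob t' A f g t ht'1 hfg htf htg ht1
      hnf' hnt'g (fun h => hFf.1 h.symm) (fun h => hFg.1 h.symm)
      (fun h => hntt' h.symm)
      (G.ne_of_adj ht'1) (fun h => hfF.1 (h.symm ▸ (⟨ht'1, ht'2, ht'3, ht'4⟩ : t' ∈ T)))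
      (fun h => hgF.1 (h.symm ▸ (⟨ht'1, ht'2, ht'3, ht'4⟩ : t' ∈ T)))
      (fun h => hnf' (h ▸ htf))
      hFf.2.2.2.2.1.symm hFg.2.2.2.2.1.symm (G.ne_of_adj ht1).symm
      (G.ne_of_adj hfg) (fun h => hfF.1 (h.symm ▸ (⟨ht1, ht2, ht3, ht4⟩ : t ∈ T)))
      (fun h => hgF.1 (h.symm ▸ (⟨ht1, ht2, ht3, ht4⟩ : t ∈ T)))
  -- apply the gluing lemma
  refine glue hcrit {v | v ∉ T ∧ v ∉ Rc} Rc T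
    (fun v hv => hv.1) ?_ (fun v hv => hv.2) ?_ ?_ ?_
    (fun t => ({v | v ∈ Far ∧ G.Adj t v} : Set V)) ?_ ?_ A ?_ C ?_
  · intro v hv
    obtain ⟨h, -⟩ := hv
    exact h
  · intro v
    by_cases h1 : v ∈ T
    · exact Or.inr (Or.inr h1)
    · by_cases h2 : v ∈ Rc
      · exact Or.inr (Or.inl h2)
      · exact Or.inl ⟨h1, h2⟩
  · intro p hp q hq hadj
    obtain ⟨h, hr⟩ := hq
    exact hp.2 ⟨hp.1, (hFadj ⟨p, hp.1⟩ q h hadj).trans hr⟩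
  · intro q hq s hs
    exact (hRcT q hq s hs).symm
  · -- hmod
    intro t ht t' ht' hk v hvT hadj
    by_cases hvRa : v ∈ Ra
    · exact (hRaT v hvRa t' ht').symm
    · by_cases hvRc : v ∈ Rc
      · exact (hRcT v hvRc t' ht').symm
      · have hvF : v ∈ Far := ⟨hvT, hvRa, hvRc⟩
        have hk' : {v | v ∈ Far ∧ G.Adj t v} = {v | v ∈ Far ∧ G.Adj t' v} := hk
        have hmem : v ∈ {v | v ∈ Far ∧ G.Adj t v} := ⟨hvF, hadj.symm⟩
        rw [hk'] at hmem
        exact hmem.2.symm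
  · -- hcomp
    intro t ht t' ht' hk
    have hex : ∃ f, (f ∈ Far ∧ G.Adj t f ∧ ¬ G.Adj t' f) ∨
        (f ∈ Far ∧ G.Adj t' f ∧ ¬ G.Adj t f) := by
      by_contra hno
      push_neg at hno
      apply hk
      show {v | v ∈ Far ∧ G.Adj t v} = {v | v ∈ Far ∧ G.Adj t' v}
      ext f
      constructor
      · rintro ⟨hfF, htf⟩
        exact ⟨hfF, (hno f).1 hfF htf⟩
      · rintro ⟨hfF, htf⟩
        exact ⟨hfF, (hno f).2 hfF htf⟩
    obtain ⟨f, hf | hf⟩ := hex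
    · exact hstep t ht t' ht' f hf.1 hf.2.1 hf.2.2
    · exact (hstep t' ht' t ht f hf.1 hf.2.1 hf.2.2).symm
  · exact ⟨hATc, fun hA => by
      obtain ⟨h, hr⟩ := hA
      exact hF1 hr⟩
  · exact ⟨hCTc, Reachable.refl _⟩

end Stmt6Aux

/-- Every finite critical `(P₅, co-banner)`-free graph is `2K₂`-free. -/
theorem stmt6 {V : Type} [Fintype V] (G : SimpleGraph V) (hcrit : IsCritical G)
    (hP5 : IndFree (pathGraph 5) G) (hcob : IndFree coBanner G) :
    IndFree twoK2 G := by
  classical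
  by_contra h
  obtain ⟨a, b, c, d, h1, h2, h3, h4, h5, h6, h7, h8, h9, h10⟩ := Stmt6Aux.extract_2K2 h
  exact Stmt6Aux.main hcrit hP5 hcob a b c d h1 h2 h3 h4 h5 h6 h7 h8 h9 h10
end
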